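/- arXiv:2107.12035 — 5 statements merged into one kernel-verified Lean document; each statement's English description precedes it below -/
import Mathlib

section
/- (Generalized Newton–MacLaurin inequality, Proposition 2.3.) Let n ≥ 2 and let k, l, r, s be integers with n ≥ k > l ≥ 0, r > s ≥ 0, k ≥ r and l ≥ s. Then for every λ ∈ Γ_k one has [ (σ_k(λ)/C(n,k)) / (σ_l(λ)/C(n,l)) ]^{1/(k−l)} ≤ [ (σ_r(λ)/C(n,r)) / (σ_s(λ)/C(n,s)) ]^{1/(r−s)}, where C(n,m) = n!/(m!(n−m)!) is the binomial coefficient. -/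
open Finset Polynomial

section NewtonAux

lemma splits_derivative (P : ℝ[X]) (hP : P.Splits) :
    P.derivative.Splits := by
  rcases eq_or_ne P.natDegree 0 with h0 | h0
  · rw [Polynomial.derivative_of_natDegree_zero h0]; exact Splits.zero
  have hd : P.derivative.natDegree = P.natDegree - 1 :=
    Polynomial.natDegree_eq_of_degree_eq_some
      (Polynomial.degree_derivative_eq P (Nat.pos_of_ne_zero h0))
  rw [Polynomial.splits_iff_card_roots] at hP ⊢
  have h1 := Polynomial.card_roots_le_derivative P
  have h2 := Polynomial.card_roots' P.derivative
  omega

variable {ι : Type*} [DecidableEq ι]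

lemma sq_sum_expand (s : Finset ι) (f : ι → ℝ) :
    (∑ i ∈ s, f i) ^ 2 =
      (∑ i ∈ s, f i ^ 2) + 2 * ∑ u ∈ s.powersetCard 2, ∏ i ∈ u, f i := by
  induction s using Finset.induction with
  | empty =>
    rw [show (∅ : Finset ι).powersetCard 2 = ∅ from
      Finset.powersetCard_eq_empty.mpr (by simp)]
    simp
  | insert a s h ih =>
    rw [Finset.sum_insert h, Finset.sum_insert h,
      Finset.powersetCard_succ_insert h, Finset.sum_union, Finset.sum_image]
    · rw [Finset.powersetCard_one, Finset.sum_map]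
      have he : ∀ i ∈ s, ∏ j ∈ insert a ({i} : Finset ι), f j = f a * f i := by
        intro i hi
        rw [Finset.prod_insert (by simp; rintro rfl; exact h hi), Finset.prod_singleton]
      calc (f a + ∑ x ∈ s, f x) ^ 2
          = f a ^ 2 + ((∑ x ∈ s, f x) ^ 2) + 2 * (f a * ∑ x ∈ s, f x) := by ring
        _ = _ := by
          rw [ih]
          have h2 : ∑ x ∈ s, ∏ i ∈ insert a ({x} : Finset ι), f i
              = f a * ∑ x ∈ s, f x := by
            rw [Finset.mul_sum]; exact Finset.sum_congr rfl he
          simp only [Function.Embedding.coeFn_mk]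
          rw [h2]
          ring
    · intro t ht t' ht' htt
      have ha : a ∉ t := fun hat => h ((Finset.mem_powersetCard.mp ht).1 hat)
      have ha' : a ∉ t' := fun hat => h ((Finset.mem_powersetCard.mp ht').1 hat)
      have := congrArg (fun u => Finset.erase u a) htt
      simpa [Finset.erase_insert ha, Finset.erase_insert ha'] using this
    · rw [Finset.disjoint_left]
      intro u hu hu'
      obtain ⟨t, ht, rfl⟩ := Finset.mem_image.mp hu'
      have : a ∉ (insert a t : Finset ι) :=
        fun hat => h ((Finset.mem_powersetCard.mp hu).1 hat)
      exact this (Finset.mem_insert_self a t)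

lemma sum_prod_compl {ι : Type*} [Fintype ι] [DecidableEq ι] (j : ℕ)
    (hj : j ≤ Fintype.card ι) (f : ι → ℝ) :
    ∑ u ∈ Finset.powersetCard (Fintype.card ι - j) (univ : Finset ι), ∏ i ∈ u, f i
      = ∑ u ∈ Finset.powersetCard j (univ : Finset ι), ∏ i ∈ uᶜ, f i := by
  refine Finset.sum_nbij' (fun t => tᶜ) (fun u => uᶜ) ?_ ?_ ?_ ?_ ?_
  · intro a ha
    rw [Finset.mem_powersetCard_univ] at ha ⊢
    rw [Finset.card_compl, ha]
    omega
  · intro a ha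
    rw [Finset.mem_powersetCard_univ] at ha ⊢
    rw [Finset.card_compl, ha]
  · intro a _; exact compl_compl a
  · intro a _; exact compl_compl a
  · intro a _; rw [compl_compl]

lemma newton_base_fn {ι : Type*} [Fintype ι] [DecidableEq ι] (c : ℕ)
    (hcard : Fintype.card ι = c + 2) (f : ι → ℝ) :
    2 * ((c : ℝ) + 2) ^ 2 *
      ((∑ u ∈ powersetCard (c+2) (univ : Finset ι), ∏ i ∈ u, f i) *
       (∑ u ∈ powersetCard c (univ : Finset ι), ∏ i ∈ u, f i))
    ≤ ((c : ℝ) + 2) * ((c : ℝ) + 1) *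
      (∑ u ∈ powersetCard (c+1) (univ : Finset ι), ∏ i ∈ u, f i) ^ 2 := by
  set A : ι → ℝ := fun i => ∏ t ∈ ({i} : Finset ι)ᶜ, f t with hA
  have h1 : (∑ u ∈ powersetCard (c+1) (univ : Finset ι), ∏ i ∈ u, f i) = ∑ i, A i := by
    have h := sum_prod_compl (ι := ι) 1 (by omega) f
    rw [hcard, show c + 2 - 1 = c + 1 by omega] at h
    rw [h, Finset.powersetCard_one, Finset.sum_map]
    rfl
  have h2 : (∑ u ∈ powersetCard (c+2) (univ : Finset ι), ∏ i ∈ u, f i) = ∏ i, f i := by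
    rw [← hcard, ← Finset.card_univ, Finset.powersetCard_self, Finset.sum_singleton]
  have h3 : (∏ i, f i) * (∑ u ∈ powersetCard c (univ : Finset ι), ∏ i ∈ u, f i)
      = ∑ u ∈ powersetCard 2 (univ : Finset ι), ∏ i ∈ u, A i := by
    have h := sum_prod_compl (ι := ι) 2 (by omega) f
    rw [hcard, show c + 2 - 2 = c by omega] at h
    rw [h, Finset.mul_sum]
    refine Finset.sum_congr rfl ?_
    intro u hu
    obtain ⟨x, y, hxy, rfl⟩ := Finset.card_eq_two.mp (Finset.mem_powersetCard_univ.mp hu)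
    rw [Finset.prod_pair hxy]
    have hyc : y ∉ ({x, y} : Finset ι)ᶜ := by simp
    have hxc : x ∉ ({x, y} : Finset ι)ᶜ := by simp
    have hAx : A x = f y * ∏ t ∈ ({x, y} : Finset ι)ᶜ, f t := by
      show ∏ t ∈ ({x} : Finset ι)ᶜ, f t = _
      have : ({x} : Finset ι)ᶜ = insert y (({x, y} : Finset ι)ᶜ) := by
        ext z
        simp only [Finset.mem_compl, Finset.mem_singleton, Finset.mem_insert,
          Finset.mem_compl, Finset.mem_insert, Finset.mem_singleton]
        constructor
        · intro hz
          by_cases hzy : z = y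
          · exact Or.inl hzy
          · exact Or.inr (by tauto)
        · rintro (rfl | hz)
          · exact Ne.symm hxy
          · tauto
      rw [this, Finset.prod_insert hyc]
    have hAy : A y = f x * ∏ t ∈ ({x, y} : Finset ι)ᶜ, f t := by
      show ∏ t ∈ ({y} : Finset ι)ᶜ, f t = _
      have : ({y} : Finset ι)ᶜ = insert x (({x, y} : Finset ι)ᶜ) := by
        ext z
        simp only [Finset.mem_compl, Finset.mem_singleton, Finset.mem_insert]
        constructor
        · intro hz
          by_cases hzx : z = x
          · exact Or.inl hzx
          · exact Or.inr (by tauto)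
        · rintro (rfl | hz)
          · exact hxy
          · tauto
      rw [this, Finset.prod_insert hxc]
    have huniv : (∏ i, f i)
        = f x * f y * ∏ t ∈ ({x, y} : Finset ι)ᶜ, f t := by
      rw [← Finset.prod_mul_prod_compl ({x, y} : Finset ι) f, Finset.prod_pair hxy]
    rw [hAx, hAy, huniv]
    ring
  rw [h1, h2]
  have hsq := sq_sum_expand (univ : Finset ι) A
  have hcs : (∑ i, A i) ^ 2 ≤ ((c : ℝ) + 2) * ∑ i, A i ^ 2 := by
    have := sq_sum_le_card_mul_sum_sq (s := (univ : Finset ι)) (f := A)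
    rwa [Finset.card_univ, hcard, Nat.cast_add, Nat.cast_ofNat] at this
  nlinarith [h3, hsq, hcs, sq_nonneg (∑ i, A i)]

lemma newton_base_ms (c : ℕ) (s : Multiset ℝ) (hc : Multiset.card s = c + 2) :
    2 * ((c : ℝ) + 2) ^ 2 * (s.esymm (c+2) * s.esymm c)
      ≤ ((c : ℝ) + 2) * ((c : ℝ) + 1) * (s.esymm (c+1)) ^ 2 := by
  set l := s.toList with hldef
  have hs : (↑l : Multiset ℝ) = s := s.coe_toList
  have hl : l.length = c + 2 := by rw [hldef, Multiset.length_toList, hc]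
  have key : ∀ j, s.esymm j
      = ∑ u ∈ powersetCard j (univ : Finset (Fin l.length)), ∏ i ∈ u, l.get i := by
    intro j
    rw [← Finset.esymm_map_val l.get univ j, Fin.univ_val_map, List.ofFn_get, hs]
  rw [key (c+2), key c, key (c+1)]
  exact newton_base_fn c (by simp [hl]) l.get

lemma newton_base_poly (c : ℕ) (P : ℝ[X]) (hsp : P.Splits)
    (hdeg : P.natDegree = c + 2) :
    2 * ((c : ℝ) + 2) ^ 2 * (P.coeff 0 * P.coeff 2)
      ≤ ((c : ℝ) + 2) * ((c : ℝ) + 1) * (P.coeff 1) ^ 2 := by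
  have hroots : Multiset.card P.roots = P.natDegree :=
    (Polynomial.splits_iff_card_roots).mp hsp
  have h0 : P.coeff 0 = P.leadingCoeff * (-1) ^ (c + 2) * P.roots.esymm (c + 2) := by
    have := Polynomial.coeff_eq_esymm_roots_of_splits hsp (k := 0) (by omega)
    rwa [hdeg, Nat.sub_zero] at this
  have h1 : P.coeff 1 = P.leadingCoeff * (-1) ^ (c + 1) * P.roots.esymm (c + 1) := by
    have := Polynomial.coeff_eq_esymm_roots_of_splits hsp (k := 1) (by omega)
    rwa [hdeg, show c + 2 - 1 = c + 1 by omega] at this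
  have h2 : P.coeff 2 = P.leadingCoeff * (-1) ^ c * P.roots.esymm c := by
    have := Polynomial.coeff_eq_esymm_roots_of_splits hsp (k := 2) (by omega)
    rwa [hdeg, show c + 2 - 2 = c by omega] at this
  have hms := newton_base_ms c P.roots (by rw [hroots, hdeg])
  have hsign : ((-1 : ℝ) ^ (c + 2)) * ((-1 : ℝ) ^ c) = ((-1 : ℝ) ^ c) ^ 2 := by
    ring
  have hsign2 : (((-1 : ℝ) ^ c) ^ 2 : ℝ) = 1 := by
    rw [← pow_mul, mul_comm, pow_mul]; norm_num
  have hsq : P.leadingCoeff ^ 2 ≥ 0 := sq_nonneg _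
  rw [h0, h1, h2]
  have e0 : P.leadingCoeff * (-1) ^ (c + 2) * P.roots.esymm (c + 2)
      * (P.leadingCoeff * (-1) ^ c * P.roots.esymm c)
      = P.leadingCoeff ^ 2 * (P.roots.esymm (c + 2) * P.roots.esymm c) := by
    have h : ((-1 : ℝ) ^ (c + 2)) * ((-1 : ℝ) ^ c) = 1 := by rw [hsign, hsign2]
    linear_combination (P.leadingCoeff ^ 2 * (P.roots.esymm (c + 2) * P.roots.esymm c)) * h
  have e1 : (P.leadingCoeff * (-1) ^ (c + 1) * P.roots.esymm (c + 1)) ^ 2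
      = P.leadingCoeff ^ 2 * (P.roots.esymm (c + 1)) ^ 2 := by
    have h : ((-1 : ℝ) ^ (c + 1)) ^ 2 = 1 := by
      rw [← pow_mul, mul_comm, pow_mul]; norm_num
    linear_combination (P.leadingCoeff ^ 2 * (P.roots.esymm (c + 1)) ^ 2) * h
  rw [e0, e1]
  nlinarith [hms, hsq]

lemma choose_mul_id (M i : ℕ) :
    (M + 1).choose i * ((M + 1) - i) = (M + 1) * M.choose i := by
  have h1 := Nat.choose_succ_right_eq (M + 1) i
  have h2 := Nat.add_one_mul_choose_eq M i
  omega

lemma poly_newton : ∀ (m : ℕ) (P : ℝ[X]), P.Splits → P.natDegree = m →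
    ∀ b : ℕ, b + 2 ≤ m →
    P.coeff (m - (b+2)) / ((m.choose (b+2) : ℝ)) * (P.coeff (m - b) / (m.choose b : ℝ)) ≤
      (P.coeff (m - (b+1)) / (m.choose (b+1) : ℝ)) ^ 2 := by
  intro m
  induction m with
  | zero => intro P _ _ b hb; omega
  | succ M IH =>
    intro P hsp hdeg b hb
    rcases Nat.lt_or_ge (b + 2) (M + 1) with hlt | hge
    · -- inductive step via derivative
      have hM1 : 0 < P.natDegree := by omega
      have hd : P.derivative.natDegree = M := by
        have h := Polynomial.natDegree_eq_of_degree_eq_some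
          (Polynomial.degree_derivative_eq P hM1)
        rw [hdeg] at h
        omega
      have key := IH P.derivative (splits_derivative P hsp) hd b (by omega)
      have hrel : ∀ i, i ≤ M → P.derivative.coeff (M - i) / ((M.choose i : ℝ))
          = ((M : ℝ) + 1) * (P.coeff ((M + 1) - i) / (((M + 1).choose i : ℝ))) := by
        intro i hi
        have hidx : (M - i) + 1 = (M + 1) - i := by omega
        rw [Polynomial.coeff_derivative, hidx]
        have hchoose : (((M + 1).choose i : ℝ)) * (((M : ℝ) + 1) - (i : ℝ))
            = ((M : ℝ) + 1) * ((M.choose i : ℝ)) := by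
          have := choose_mul_id M i
          have hcast : (((M + 1) - i : ℕ) : ℝ) = ((M : ℝ) + 1) - (i : ℝ) := by
            push_cast [Nat.cast_sub (by omega : i ≤ M + 1)]
            ring
          calc (((M + 1).choose i : ℝ)) * (((M : ℝ) + 1) - (i : ℝ))
              = (((M + 1).choose i * ((M + 1) - i) : ℕ) : ℝ) := by
                push_cast [hcast]; ring
            _ = (((M + 1) * M.choose i : ℕ) : ℝ) := by rw [this]
            _ = ((M : ℝ) + 1) * ((M.choose i : ℝ)) := by push_cast; ring
        have hcast2 : (((M - i : ℕ) : ℝ) + 1) = ((M : ℝ) + 1) - (i : ℝ) := by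
          push_cast [Nat.cast_sub hi]; ring
        rw [hcast2]
        have hpos1 : (0 : ℝ) < (M.choose i : ℝ) := by
          exact_mod_cast Nat.choose_pos hi
        have hpos2 : (0 : ℝ) < ((M + 1).choose i : ℝ) := by
          exact_mod_cast Nat.choose_pos (by omega : i ≤ M + 1)
        field_simp
        linear_combination P.coeff (M + 1 - i) * hchoose
      rw [hrel b (by omega), hrel (b + 1) (by omega), hrel (b + 2) (by omega)] at key
      have hpos : (0 : ℝ) < ((M : ℝ) + 1) ^ 2 := by positivity
      rw [hdeg] at *
      have h2 : ((M : ℝ) + 1) ^ 2 * (P.coeff (M + 1 - (b + 2)) / (((M + 1).choose (b + 2) : ℝ))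
            * (P.coeff (M + 1 - b) / (((M + 1).choose b : ℝ))))
          ≤ ((M : ℝ) + 1) ^ 2 * (P.coeff (M + 1 - (b + 1)) / (((M + 1).choose (b + 1) : ℝ))) ^ 2 := by
        nlinarith [key]
      exact le_of_mul_le_mul_left (by linarith [h2]) hpos
    · -- base case: b + 2 = M + 1
      have hM : M = b + 1 := by omega
      subst hM
      simp only [show b + 1 + 1 = b + 2 from by omega]
      rw [show b + 2 - (b + 2) = 0 from by omega, show b + 2 - (b + 1) = 1 from by omega,
        show b + 2 - b = 2 from by omega, Nat.choose_self, Nat.choose_succ_self_right]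
      have hbase := newton_base_poly b P hsp (by omega)
      have hCb : (0 : ℝ) < ((b + 2).choose b : ℝ) := by
        exact_mod_cast Nat.choose_pos (by omega : b ≤ b + 2)
      have h2C : ((b + 2).choose b : ℝ) * 2 = ((b : ℝ) + 2) * ((b : ℝ) + 1) := by
        have hsym : (b + 2).choose b = (b + 2).choose 2 := by
          have h := Nat.choose_symm (by omega : b ≤ b + 2)
          rw [show b + 2 - b = 2 from by omega] at h
          exact h.symm
        have hmul := Nat.add_one_mul_choose_eq (b + 1) 1
        rw [Nat.choose_one_right] at hmul
        rw [hsym]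
        have hc := congrArg (fun x : ℕ => (x : ℝ)) hmul
        push_cast at hc
        norm_num at hc ⊢
        linear_combination hc.symm
      rw [Nat.cast_one, div_one, div_pow]
      rw [show P.coeff 0 * (P.coeff 2 / (((b + 2).choose b : ℕ) : ℝ))
          = (P.coeff 0 * P.coeff 2) / (((b + 2).choose b : ℕ) : ℝ) from by ring]
      have hpos2 : (0 : ℝ) < (((b + 1 + 1 : ℕ)) : ℝ) ^ 2 := by
        have : (0 : ℝ) < ((b + 1 + 1 : ℕ) : ℝ) := by exact_mod_cast Nat.succ_pos _
        positivity
      rw [div_le_div_iff₀ hCb hpos2]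
      have hx : ((b : ℝ) + 2) * ((b : ℝ) + 1) * P.coeff 1 ^ 2
          = ((b + 2).choose b : ℝ) * 2 * P.coeff 1 ^ 2 := by
        linear_combination P.coeff 1 ^ 2 * h2C.symm
      push_cast
      nlinarith [hbase, hx]

end NewtonAux

/-- The `k`-th elementary symmetric function of a vector `lam ∈ ℝⁿ`. -/
noncomputable def esymm (n k : ℕ) (lam : Fin n → ℝ) : ℝ :=
  ∑ s ∈ Finset.powersetCard k (Finset.univ : Finset (Fin n)), ∏ i ∈ s, lam i

/-- The Gårding cone `Γ_k = {λ ∈ ℝⁿ : σ_j(λ) > 0 for all 1 ≤ j ≤ k}`. -/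
def GammaCone (n k : ℕ) : Set (Fin n → ℝ) :=
  {lam | ∀ j : ℕ, 1 ≤ j → j ≤ k → 0 < esymm n j lam}

lemma newton_esymm (n b : ℕ) (hb : b + 2 ≤ n) (lam : Fin n → ℝ) :
    esymm n (b+2) lam / (n.choose (b+2) : ℝ) * (esymm n b lam / (n.choose b : ℝ))
      ≤ (esymm n (b+1) lam / (n.choose (b+1) : ℝ)) ^ 2 := by
  set P : ℝ[X] := ∏ i ∈ (univ : Finset (Fin n)), (X + C (lam i)) with hP
  have hmon : P.Monic := monic_prod_of_monic _ _ fun i _ => monic_X_add_C (lam i)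
  have hdeg : P.natDegree = n := by
    rw [hP, Polynomial.natDegree_prod _ _ fun i _ => (monic_X_add_C (lam i)).ne_zero]
    simp [Polynomial.natDegree_X_add_C]
  have hsp : P.Splits := by
    rw [hP]
    refine Splits.prod fun i _ => ?_
    exact Splits.of_degree_le_one (le_of_eq (Polynomial.degree_X_add_C (lam i)))
  have hcard : #(univ : Finset (Fin n)) = n := by simp
  have hco : ∀ i, i ≤ n → P.coeff (n - i) = esymm n i lam := by
    intro i hi
    have h := Finset.prod_X_add_C_coeff (univ : Finset (Fin n)) lam
      (k := n - i) (by rw [hcard]; omega)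
    rw [hcard, show n - (n - i) = i from by omega] at h
    rw [hP, h]
    rfl
  have key := poly_newton n P hsp hdeg b hb
  rw [hco (b+2) (by omega), hco b (by omega), hco (b+1) (by omega)] at key
  exact key

/-- Generalized Newton–MacLaurin inequality (Proposition 2.3). -/
theorem newton_maclaurin (n k l r s : ℕ) (hn : 2 ≤ n) (hkn : k ≤ n) (hlk : l < k)
    (hsr : s < r) (hrk : r ≤ k) (hsl : s ≤ l)
    (lam : Fin n → ℝ) (hlam : lam ∈ GammaCone n k) :
    ((esymm n k lam / (n.choose k : ℝ)) / (esymm n l lam / (n.choose l : ℝ)))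
        ^ ((1 : ℝ) / ((k : ℝ) - (l : ℝ)))
      ≤ ((esymm n r lam / (n.choose r : ℝ)) / (esymm n s lam / (n.choose s : ℝ)))
        ^ ((1 : ℝ) / ((r : ℝ) - (s : ℝ))) := by
  set p : ℕ → ℝ := fun j => esymm n j lam / (n.choose j : ℝ) with hpdef
  have hp : ∀ j, j ≤ k → 0 < p j := by
    intro j hj
    have hcpos : (0 : ℝ) < (n.choose j : ℝ) :=
      by exact_mod_cast Nat.choose_pos (le_trans hj hkn)
    rcases Nat.eq_zero_or_pos j with rfl | hj1
    · have h0 : esymm n 0 lam = 1 := by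
        rw [esymm, Finset.powersetCard_zero, Finset.sum_singleton, Finset.prod_empty]
      show 0 < esymm n 0 lam / (n.choose 0 : ℝ)
      rw [h0]
      positivity
    · exact div_pos (hlam j hj1 hj) hcpos
  set u : ℕ → ℝ := fun j => Real.log (p (j+1)) - Real.log (p j) with hudef
  -- one-step monotonicity of u
  have hstep : ∀ j, j + 2 ≤ k → u (j+1) ≤ u j := by
    intro j hj
    have hne := newton_esymm n j (by omega) lam
    have h0 : 0 < p j := hp j (by omega)
    have h1 : 0 < p (j+1) := hp (j+1) (by omega)
    have h2 : 0 < p (j+2) := hp (j+2) (by omega)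
    have hmul : p (j+2) * p j ≤ p (j+1) ^ 2 := hne
    have hlog : Real.log (p (j+2) * p j) ≤ Real.log (p (j+1) ^ 2) :=
      Real.log_le_log (by positivity) hmul
    rw [Real.log_mul (ne_of_gt h2) (ne_of_gt h0), Real.log_pow] at hlog
    show Real.log (p (j+2)) - Real.log (p (j+1)) ≤ Real.log (p (j+1)) - Real.log (p j)
    push_cast at hlog
    linarith
  have hmono : ∀ d i, i + d + 1 ≤ k → u (i + d) ≤ u i := by
    intro d
    induction d with
    | zero => intro i _; exact le_refl _
    | succ d ih =>
      intro i h
      have h1 : u (i + d + 1) ≤ u (i + d) := hstep (i + d) (by omega)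
      have h2 : u (i + d) ≤ u i := ih i (by omega)
      calc u (i + (d + 1)) = u (i + d + 1) := by ring_nf
        _ ≤ u i := le_trans h1 h2
  have hmono' : ∀ i j, i ≤ j → j + 1 ≤ k → u j ≤ u i := by
    intro i j hij hjk
    obtain ⟨d, rfl⟩ := Nat.exists_eq_add_of_le hij
    exact hmono d i (by omega)
  set S : ℕ → ℕ → ℝ := fun a b => ∑ j ∈ Finset.Ico a b, u j with hSdef
  have hrange : ∀ m, ∑ j ∈ Finset.range m, u j = Real.log (p m) - Real.log (p 0) := by
    intro m
    exact Finset.sum_range_sub (fun j => Real.log (p j)) m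
  have htel : ∀ a b, a ≤ b → S a b = Real.log (p b) - Real.log (p a) := by
    intro a b hab
    show ∑ j ∈ Finset.Ico a b, u j = _
    rw [Finset.sum_Ico_eq_sub u hab, hrange, hrange]
    ring
  -- one-step extend-left
  have hextstep : ∀ a, a + 1 < k →
      S (a+1) k / ((k:ℝ) - ((a+1 : ℕ) : ℝ)) ≤ S a k / ((k:ℝ) - a) := by
    intro a ha
    push_cast
    have hd1 : (0:ℝ) < (k:ℝ) - ((a:ℝ)+1) := by
      have : (a:ℝ) + 1 < (k:ℝ) := by exact_mod_cast ha
      linarith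
    have hd2 : (0:ℝ) < (k:ℝ) - a := by linarith
    have hsplit : S a k = u a + S (a+1) k :=
      Finset.sum_eq_sum_Ico_succ_bot (by omega) u
    have hbound : S (a+1) k ≤ ((k - (a+1) : ℕ) : ℝ) * u a := by
      have hle : ∀ j ∈ Finset.Ico (a+1) k, u j ≤ u a := by
        intro j hj
        rw [Finset.mem_Ico] at hj
        exact hmono' a j (by omega) (by omega)
      have := Finset.sum_le_card_nsmul (Finset.Ico (a+1) k) u (u a) hle
      rwa [Nat.card_Ico, nsmul_eq_mul] at this
    have hcast : ((k - (a+1) : ℕ) : ℝ) = (k:ℝ) - ((a:ℝ)+1) := by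
      push_cast [Nat.cast_sub (by omega : a + 1 ≤ k)]; ring
    rw [hcast] at hbound
    rw [div_le_div_iff₀ hd1 hd2, hsplit]
    nlinarith [hbound]
  -- extend-left
  have hext : ∀ d a, a + d = l → S l k / ((k:ℝ) - l) ≤ S a k / ((k:ℝ) - a) := by
    intro d
    induction d with
    | zero => intro a ha; rw [show a = l from by omega]
    | succ d ih =>
      intro a ha
      have h1 := ih (a+1) (by omega)
      have h2 := hextstep a (by omega)
      exact le_trans h1 h2
  -- one-step shrink-right
  have hshrstep : ∀ b, s < b → b + 1 ≤ k →
      S s (b+1) / (((b:ℝ)+1) - s) ≤ S s b / ((b:ℝ) - s) := by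
    intro b hsb hbk
    have hd1 : (0:ℝ) < ((b:ℝ)+1) - s := by
      have : (s:ℝ) < (b:ℝ) := by exact_mod_cast hsb
      linarith
    have hd2 : (0:ℝ) < (b:ℝ) - s := by
      have : (s:ℝ) < (b:ℝ) := by exact_mod_cast hsb
      linarith
    have hsplit : S s (b+1) = S s b + u b := Finset.sum_Ico_succ_top (by omega) u
    have hbound : ((b - s : ℕ) : ℝ) * u b ≤ S s b := by
      have hle : ∀ j ∈ Finset.Ico s b, u b ≤ u j := by
        intro j hj
        rw [Finset.mem_Ico] at hj
        exact hmono' j b (by omega) (by omega)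
      have := Finset.card_nsmul_le_sum (Finset.Ico s b) u (u b) hle
      rwa [Nat.card_Ico, nsmul_eq_mul] at this
    have hcast : ((b - s : ℕ) : ℝ) = (b:ℝ) - s := by
      push_cast [Nat.cast_sub (by omega : s ≤ b)]; ring
    rw [hcast] at hbound
    rw [div_le_div_iff₀ hd1 hd2, hsplit]
    nlinarith [hbound]
  -- shrink-right
  have hshr : ∀ d, r + d ≤ k → S s (r + d) / (((r+d : ℕ):ℝ) - s) ≤ S s r / ((r:ℝ) - s) := by
    intro d
    induction d with
    | zero => intro _; norm_num
    | succ d ih =>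
      intro h
      have h1 := hshrstep (r + d) (by omega) (by omega)
      have h2 := ih (by omega)
      push_cast at h1 ⊢
      calc S s (r + (d+1)) / ((r:ℝ) + (d+1) - s)
          = S s (r + d + 1) / (((r+d:ℝ)+1) - s) := by norm_num; ring_nf
        _ ≤ S s (r + d) / ((r+d:ℝ) - s) := h1
        _ ≤ S s r / ((r:ℝ) - s) := by push_cast at h2; exact h2
  -- chain
  have hchain : S l k / ((k:ℝ) - l) ≤ S s r / ((r:ℝ) - s) := by
    have h1 := hext (l - s) s (by omega)
    have h2 := hshr (k - r) (by omega)
    rw [show r + (k - r) = k from by omega] at h2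
    calc S l k / ((k:ℝ) - l) ≤ S s k / ((k:ℝ) - s) := h1
      _ ≤ S s r / ((r:ℝ) - s) := by
        have : ((k:ℕ):ℝ) = (k:ℝ) := rfl
        exact h2
  -- convert to rpow
  have hpk := hp k le_rfl
  have hpl := hp l (by omega)
  have hpr := hp r hrk
  have hps := hp s (by omega)
  have hkl : (0:ℝ) < (k:ℝ) - l := by
    have : (l:ℝ) < (k:ℝ) := by exact_mod_cast hlk
    linarith
  have hrs : (0:ℝ) < (r:ℝ) - s := by
    have : (s:ℝ) < (r:ℝ) := by exact_mod_cast hsr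
    linarith
  have hL : (p k / p l) ^ ((1:ℝ) / ((k:ℝ) - l)) = Real.exp (S l k / ((k:ℝ) - l)) := by
    rw [Real.rpow_def_of_pos (div_pos hpk hpl), Real.log_div (ne_of_gt hpk) (ne_of_gt hpl),
      htel l k (by omega)]
    ring_nf
  have hR : (p r / p s) ^ ((1:ℝ) / ((r:ℝ) - s)) = Real.exp (S s r / ((r:ℝ) - s)) := by
    rw [Real.rpow_def_of_pos (div_pos hpr hps), Real.log_div (ne_of_gt hpr) (ne_of_gt hps),
      htel s r (by omega)]
    ring_nf
  show (p k / p l) ^ ((1:ℝ) / ((k:ℝ) - l)) ≤ (p r / p s) ^ ((1:ℝ) / ((r:ℝ) - s))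
  rw [hL, hR]
  exact Real.exp_le_exp.mpr hchain
end

section
/- (Proposition 2.4, first part.) Let n ≥ 2 and 0 ≤ l < k ≤ n. For every λ ∈ Γ_k and every index i ∈ {1,…,n}, the partial derivative with respect to the i-th coordinate of the function μ ↦ σ_k(μ)/σ_l(μ) is strictly positive at λ. (The function is well defined and smooth on the open set Γ_k, since σ_l > 0 on Γ_k.) -/
open Multiset Polynomial

namespace QOSE


lemma esymm_zero' (s : Multiset ℝ) : s.esymm 0 = 1 := by
  simp [Multiset.esymm, Multiset.powersetCard_zero_left]

lemma esymm_cons (a : ℝ) (s : Multiset ℝ) (k : ℕ) :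
    (a ::ₘ s).esymm (k + 1) = s.esymm (k + 1) + a * s.esymm k := by
  simp only [Multiset.esymm, Multiset.powersetCard_cons, Multiset.map_add, Multiset.sum_add,
    Multiset.map_map, Function.comp_def, Multiset.prod_cons]
  rw [Multiset.sum_map_mul_left]

lemma esymm_eq_zero (s : Multiset ℝ) {k : ℕ} (h : Multiset.card s < k) : s.esymm k = 0 := by
  simp [Multiset.esymm, Multiset.powersetCard_eq_empty _ h]

lemma esymm_card (s : Multiset ℝ) : s.esymm (Multiset.card s) = s.prod := by
  induction s using Multiset.induction with
  | empty => simp [esymm_zero']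
  | cons a t ih =>
    rw [Multiset.card_cons, esymm_cons, esymm_eq_zero t (Nat.lt_succ_self _), ih,
      Multiset.prod_cons, zero_add]

lemma esymm_one' (s : Multiset ℝ) : s.esymm 1 = s.sum := by
  induction s using Multiset.induction with
  | empty => simp [Multiset.esymm, Multiset.powersetCard_eq_empty _ (show Multiset.card (0 : Multiset ℝ) < 1 by simp)]
  | cons a t ih =>
    rw [show (1:ℕ) = 0 + 1 from rfl, esymm_cons, ih, esymm_zero', Multiset.sum_cons]; ring

lemma cs_multiset (s : Multiset ℝ) :
    s.sum ^ 2 ≤ (Multiset.card s : ℝ) * (s.map (fun x => x ^ 2)).sum := by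
  induction s using Multiset.induction with
  | empty => simp
  | cons a t ih =>
    simp only [Multiset.sum_cons, Multiset.card_cons, Multiset.map_cons]
    push_cast
    set c := (Multiset.card t : ℝ)
    set S := t.sum
    set Q := (t.map (fun x => x ^ 2)).sum
    have hc : 0 ≤ c := Nat.cast_nonneg _
    have hQ : 0 ≤ Q := Multiset.sum_nonneg (by
      intro x hx
      obtain ⟨y, _, rfl⟩ := Multiset.mem_map.mp hx
      positivity)
    have key : c * a ^ 2 + Q - 2 * a * S ≥ 0 := by
      rcases eq_or_lt_of_le hc with h0 | h0
      · have hS : S = 0 := by nlinarith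
        simp [hS, ← h0]; linarith
      · have h1 : c * (c * a ^ 2 + Q - 2 * a * S) ≥ 0 := by nlinarith [sq_nonneg (c * a - S)]
        nlinarith
    nlinarith

lemma sq_sum_eq (s : Multiset ℝ) :
    s.sum ^ 2 = (s.map (fun x => x ^ 2)).sum + 2 * s.esymm 2 := by
  induction s using Multiset.induction with
  | empty => simp [Multiset.esymm, Multiset.powersetCard_eq_empty _ (show Multiset.card (0 : Multiset ℝ) < 2 by simp)]
  | cons a t ih =>
    rw [Multiset.sum_cons, Multiset.map_cons, Multiset.sum_cons,
      show (2:ℕ) = 1 + 1 from rfl, esymm_cons, esymm_one']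
    rw [show (1:ℕ) + 1 = 2 from rfl] at *
    nlinarith [ih]

/-- Newton's inequality, case `j = 1`: `(m-1)·σ₁² ≥ 2·m·σ₂`. -/
lemma newton_one (s : Multiset ℝ) :
    2 * (Multiset.card s : ℝ) * s.esymm 2 ≤
      ((Multiset.card s : ℝ) - 1) * s.esymm 1 ^ 2 := by
  have h1 := cs_multiset s
  have h2 := sq_sum_eq s
  rw [← esymm_one'] at h1 h2
  nlinarith



-- placeholders from p1 (will concatenate later)
lemma esymm_inv_rev (s : Multiset ℝ) (h0 : (0:ℝ) ∉ s) :
    ∀ r q : ℕ, r + q = Multiset.card s →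
      (s.map (fun x => x⁻¹)).esymm r * s.prod = s.esymm q := by
  induction s using Multiset.induction with
  | empty =>
    intro r q h
    simp only [Multiset.card_zero] at h
    obtain ⟨rfl, rfl⟩ : r = 0 ∧ q = 0 := by omega
    simp [esymm_zero']
  | cons a t ih =>
    intro r q h
    have ha : a ≠ 0 := fun hh => h0 (hh ▸ Multiset.mem_cons_self a t)
    have h0t : (0:ℝ) ∉ t := fun hh => h0 (Multiset.mem_cons_of_mem hh)
    have hpt : t.prod ≠ 0 := Multiset.prod_ne_zero h0t
    rw [Multiset.card_cons] at h
    rw [Multiset.map_cons, Multiset.prod_cons]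
    rcases r with _ | r'
    · -- r = 0, q = card t + 1
      have hq : q = Multiset.card t + 1 := by omega
      subst hq
      rw [esymm_zero', one_mul, ← Multiset.card_cons a t, esymm_card, Multiset.prod_cons]
    · rw [esymm_cons]
      rcases q with _ | q'
      · -- q = 0, r' = card t
        have hr : r' = Multiset.card t := by omega
        subst hr
        rw [esymm_eq_zero (t.map fun x => x⁻¹) (by simp), zero_add]
        have hc : Multiset.card (t.map fun x => x⁻¹) = Multiset.card t := by simp
        rw [← hc, esymm_card, Multiset.prod_map_inv', esymm_zero']
        field_simp
      · have ih1 := ih h0t (r' + 1) q' (by omega)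
        have ih2 := ih h0t r' (q' + 1) (by omega)
        rw [esymm_cons]
        have : ((t.map fun x => x⁻¹).esymm (r' + 1) + a⁻¹ * (t.map fun x => x⁻¹).esymm r') *
            (a * t.prod) = a * ((t.map fun x => x⁻¹).esymm (r' + 1) * t.prod)
              + (a⁻¹ * a) * ((t.map fun x => x⁻¹).esymm r' * t.prod) := by ring
        rw [this, ih1, ih2, inv_mul_cancel₀ ha, one_mul, add_comm]

/-- Newton's inequality in the top case `j + 2 = card s`. -/
lemma newton_top (s : Multiset ℝ) (j : ℕ) (hm : j + 2 = Multiset.card s) :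
    ((Nat.choose (Multiset.card s) (j+1) : ℝ))^2 * s.esymm j * s.esymm (j+2) ≤
      (Nat.choose (Multiset.card s) j : ℝ) * (Nat.choose (Multiset.card s) (j+2) : ℝ) *
        s.esymm (j+1) ^ 2 := by
  set m := Multiset.card s with hmdef
  by_cases h0 : (0:ℝ) ∈ s
  · -- σ_{j+2} = σ_m = prod = 0
    have : s.esymm (j + 2) = 0 := by
      rw [hm, hmdef, esymm_card]
      exact Multiset.prod_eq_zero h0
    rw [this]
    have : ((Nat.choose m (j+1) : ℝ))^2 * s.esymm j * 0 = 0 := by ring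
    rw [this]
    positivity
  · -- reversal
    have hP : s.prod ≠ 0 := Multiset.prod_ne_zero h0
    set s' := s.map (fun x => x⁻¹) with hs'
    have hc' : Multiset.card s' = m := by simp [hs', hmdef]
    have e2 : s'.esymm 2 * s.prod = s.esymm j := esymm_inv_rev s h0 2 j (by omega)
    have e1 : s'.esymm 1 * s.prod = s.esymm (j+1) := esymm_inv_rev s h0 1 (j+1) (by omega)
    have e0 : s'.esymm 0 * s.prod = s.esymm (j+2) := esymm_inv_rev s h0 0 (j+2) (by omega)
    rw [esymm_zero', one_mul] at e0
    have hnewt := newton_one s'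
    rw [hc'] at hnewt
    -- binomial values: choose m (j+2) = choose m m = 1, choose m (j+1) * 1, etc.
    have hch2 : Nat.choose m (j+2) = 1 := by rw [← hm]; exact Nat.choose_self _
    have hch1 : (Nat.choose m (j+1) : ℝ) = m := by
      have h : Nat.choose m (j+1) = m := by rw [← hm]; exact Nat.choose_succ_self_right _
      exact_mod_cast h
    have hm' : (m:ℝ) = (j:ℝ) + 2 := by exact_mod_cast hm.symm
    have hchj : 2 * (Nat.choose m j : ℝ) = (m:ℝ) * ((m:ℝ) - 1) := by
      have h1 : Nat.choose m (j+1) * (j+1) = Nat.choose m j * (m - j) := Nat.choose_succ_right_eq m j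
      have hj1 : m - j = 2 := by omega
      rw [hj1] at h1
      have h1' : (Nat.choose m (j+1) : ℝ) * ((j:ℝ)+1) = (Nat.choose m j : ℝ) * 2 := by
        exact_mod_cast h1
      rw [hch1] at h1'
      nlinarith [h1']
    rw [hch2]
    push_cast
    rw [← e2, ← e1, ← e0, hch1]
    have hP2 : (0:ℝ) < s.prod ^ 2 := by positivity
    have F := mul_le_mul_of_nonneg_right hnewt hP2.le
    nlinarith [F, hchj]



lemma derivative_step (s : Multiset ℝ) (hm : 1 ≤ Multiset.card s) :
    ∃ t : Multiset ℝ, Multiset.card t = Multiset.card s - 1 ∧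
      ∀ r : ℕ, r ≤ Multiset.card s - 1 →
        (Multiset.card s : ℝ) * t.esymm r = ((Multiset.card s - r : ℕ) : ℝ) * s.esymm r := by
  classical
  set m := Multiset.card s with hmdef
  set f : ℝ[X] := (s.map fun a => X + C a).prod with hf
  have hf' : f = ((s.map fun a => -a).map fun a => X - C a).prod := by
    rw [hf, Multiset.map_map]
    apply congrArg
    apply Multiset.map_congr rfl
    intro x _
    simp [sub_neg_eq_add]
  have hroots : f.roots = s.map fun a => -a := by
    rw [hf', roots_multiset_prod_X_sub_C]
  have hdeg : f.natDegree = m := by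
    rw [hf', natDegree_multiset_prod_X_sub_C_eq_card, Multiset.card_map]
  have hcardroots : Multiset.card f.roots = m := by rw [hroots, Multiset.card_map]
  set g := derivative f with hg
  have hgdeg_le : g.natDegree ≤ m - 1 := by
    have h := natDegree_derivative_le f
    rw [hdeg] at h
    exact h
  have hle : m ≤ Multiset.card g.roots + 1 := by
    have h := f.card_roots_le_derivative
    rw [hcardroots] at h
    exact h
  have hcard_g : Multiset.card g.roots = m - 1 :=
    le_antisymm ((card_roots' g).trans hgdeg_le) (by omega)
  have hgdeg : g.natDegree = m - 1 := le_antisymm hgdeg_le (hcard_g ▸ card_roots' g)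
  have hmonic : f.Monic := by
    rw [hf]
    exact monic_multiset_prod_of_monic _ _ (fun a _ => monic_X_add_C a)
  have hlead : g.leadingCoeff = (m : ℝ) := by
    rw [Polynomial.leadingCoeff, hgdeg, hg, coeff_derivative]
    have h1 : m - 1 + 1 = m := by omega
    rw [h1]
    have h2 : f.coeff m = 1 := by
      rw [← hdeg]; exact hmonic.coeff_natDegree
    rw [h2, one_mul]
    have h3 : m - 1 + 1 = m := by omega
    exact_mod_cast h3
  have hsplit : g = C g.leadingCoeff * (g.roots.map fun a => X - C a).prod :=
    (C_leadingCoeff_mul_prod_multiset_X_sub_C (hcard_g.trans hgdeg.symm)).symm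
  set t : Multiset ℝ := g.roots.map (fun a => -a) with ht
  have hct : Multiset.card t = m - 1 := by rw [ht, Multiset.card_map, hcard_g]
  have hgt : g = C (m:ℝ) * (t.map fun a => X + C a).prod := by
    rw [hsplit, hlead, ht, Multiset.map_map]
    congr 1
    apply congrArg
    apply Multiset.map_congr rfl
    intro x _
    simp [sub_eq_add_neg]
  refine ⟨t, hct, ?_⟩
  intro r hr
  have hd : (m - 1) - r + 1 = m - r := by omega
  have hcoefg : g.coeff ((m-1) - r) = s.esymm r * ((m - r : ℕ) : ℝ) := by
    rw [hg, coeff_derivative, hd, hf, Multiset.prod_X_add_C_coeff s (by omega)]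
    have h5 : Multiset.card s - (m - r) = r := by omega
    rw [h5]
    have h6 : ((m - 1 - r : ℕ) : ℝ) + 1 = ((m - r : ℕ) : ℝ) := by exact_mod_cast hd
    rw [h6]
  have hcoefg' : g.coeff ((m-1) - r) = (m : ℝ) * t.esymm r := by
    have hcc : (m - 1) - r ≤ Multiset.card t := by omega
    rw [hgt, coeff_C_mul, Multiset.prod_X_add_C_coeff t hcc, hct]
    congr 2
    omega
  rw [← hcoefg', hcoefg]
  ring

lemma choose_id (m r : ℕ) (hm : 1 ≤ m) :
    (m - r) * Nat.choose m r = m * Nat.choose (m-1) r := by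
  have h1 := Nat.choose_succ_right_eq m r
  have h2 := Nat.add_one_mul_choose_eq (m-1) r
  rw [(by omega : m - 1 + 1 = m)] at h2
  rw [h2, h1]
  ring

/-- Newton's inequality for arbitrary real multisets. -/
theorem newton : ∀ m : ℕ, ∀ s : Multiset ℝ, Multiset.card s = m → ∀ j : ℕ, j + 2 ≤ m →
    ((Nat.choose m (j+1) : ℝ))^2 * s.esymm j * s.esymm (j+2) ≤
      (Nat.choose m j : ℝ) * (Nat.choose m (j+2) : ℝ) * s.esymm (j+1) ^ 2 := by
  intro m
  induction m using Nat.strong_induction_on with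
  | _ m IH =>
    intro s hs j hj
    rcases eq_or_lt_of_le hj with he | hlt
    · have := newton_top s j (by omega)
      rw [hs] at this
      exact this
    · obtain ⟨t, hct, hrel⟩ := derivative_step s (by omega)
      rw [hs] at hct hrel
      have IH' := IH (m-1) (by omega) t hct j (by omega)
      set sj := s.esymm j; set sj1 := s.esymm (j+1); set sj2 := s.esymm (j+2)
      set tj := t.esymm j; set tj1 := t.esymm (j+1); set tj2 := t.esymm (j+2)
      have e1 : (m:ℝ) * tj = ((m - j : ℕ) : ℝ) * sj := hrel j (by omega)
      have e2 : (m:ℝ) * tj1 = ((m - (j+1) : ℕ) : ℝ) * sj1 := hrel (j+1) (by omega)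
      have e3 : (m:ℝ) * tj2 = ((m - (j+2) : ℕ) : ℝ) * sj2 := hrel (j+2) (by omega)
      set cj : ℝ := ((m - j : ℕ) : ℝ) with hcjdef
      set cj1 : ℝ := ((m - (j+1) : ℕ) : ℝ) with hcj1def
      set cj2 : ℝ := ((m - (j+2) : ℕ) : ℝ) with hcj2def
      have hcj : (0:ℝ) < cj := by
        rw [hcjdef]
        have h : 0 < m - j := by omega
        exact_mod_cast h
      have hcj1 : (0:ℝ) < cj1 := by
        rw [hcj1def]
        have h : 0 < m - (j+1) := by omega
        exact_mod_cast h
      have hcj2 : (0:ℝ) < cj2 := by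
        rw [hcj2def]
        have h : 0 < m - (j+2) := by omega
        exact_mod_cast h
      have ida : cj * (Nat.choose m j : ℝ) = (m:ℝ) * (Nat.choose (m-1) j : ℝ) := by
        rw [hcjdef]; exact_mod_cast choose_id m j (by omega)
      have idb : cj1 * (Nat.choose m (j+1) : ℝ) = (m:ℝ) * (Nat.choose (m-1) (j+1) : ℝ) := by
        rw [hcj1def]; exact_mod_cast choose_id m (j+1) (by omega)
      have idc : cj2 * (Nat.choose m (j+2) : ℝ) = (m:ℝ) * (Nat.choose (m-1) (j+2) : ℝ) := by
        rw [hcj2def]; exact_mod_cast choose_id m (j+2) (by omega)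
      set K : ℝ := cj * cj2 * cj1^2 with hKdef
      have hK : (0:ℝ) < K := by positivity
      set A : ℝ := (Nat.choose m j : ℝ); set B : ℝ := (Nat.choose m (j+1) : ℝ)
      set D : ℝ := (Nat.choose m (j+2) : ℝ)
      set A' : ℝ := (Nat.choose (m-1) j : ℝ); set B' : ℝ := (Nat.choose (m-1) (j+1) : ℝ)
      set D' : ℝ := (Nat.choose (m-1) (j+2) : ℝ)
      have L1 : K * (B^2 * sj * sj2) = (m:ℝ)^4 * (B'^2 * tj * tj2) := by
        calc K * (B^2 * sj * sj2) = (cj1*B)*(cj1*B)*(cj*sj)*(cj2*sj2) := by rw [hKdef]; ring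
        _ = ((m:ℝ)*B')*((m:ℝ)*B')*((m:ℝ)*tj)*((m:ℝ)*tj2) := by rw [idb, ← e1, ← e3]
        _ = (m:ℝ)^4 * (B'^2 * tj * tj2) := by ring
      have L2 : K * (A * D * sj1^2) = (m:ℝ)^4 * (A' * D' * tj1^2) := by
        calc K * (A * D * sj1^2) = (cj*A)*(cj2*D)*((cj1*sj1)*(cj1*sj1)) := by rw [hKdef]; ring
        _ = ((m:ℝ)*A')*((m:ℝ)*D')*(((m:ℝ)*tj1)*((m:ℝ)*tj1)) := by rw [ida, idc, ← e2]
        _ = (m:ℝ)^4 * (A' * D' * tj1^2) := by ring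
      have E : K * (B^2 * sj * sj2) ≤ K * (A * D * sj1^2) := by
        rw [L1, L2]
        exact mul_le_mul_of_nonneg_left IH' (by positivity)
      exact le_of_mul_le_mul_left E hK



/-- The multiset of values of `lam` away from coordinate `i`. -/
noncomputable def redM (n : ℕ) (lam : Fin n → ℝ) (i : Fin n) : Multiset ℝ :=
  ((Finset.univ.erase i).val.map lam)

lemma card_redM (n : ℕ) (lam : Fin n → ℝ) (i : Fin n) :
    Multiset.card (redM n lam i) = n - 1 := by
  rw [redM, Multiset.card_map]
  show (Finset.univ.erase i).card = n - 1
  rw [Finset.card_erase_of_mem (Finset.mem_univ i), Finset.card_univ, Fintype.card_fin]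

lemma esymm_eq_multiset (n r : ℕ) (lam : Fin n → ℝ) :
    esymm n r lam = ((Finset.univ.val : Multiset (Fin n)).map lam).esymm r :=
  (Finset.esymm_map_val lam Finset.univ r).symm

lemma univ_val_cons (n : ℕ) (i : Fin n) :
    (Finset.univ.val : Multiset (Fin n)) = i ::ₘ (Finset.univ.erase i).val := by
  rw [Finset.erase_val]
  exact (Multiset.cons_erase (by simp : i ∈ (Finset.univ.val : Multiset (Fin n)))).symm

lemma esymm_split (n : ℕ) (lam : Fin n → ℝ) (i : Fin n) (r : ℕ) :
    esymm n (r+1) lam = (redM n lam i).esymm (r+1) + lam i * (redM n lam i).esymm r := by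
  rw [esymm_eq_multiset, univ_val_cons n i, Multiset.map_cons, esymm_cons, redM]

/-- binomial log-concavity -/
lemma choose_log_concave (m j : ℕ) (hj : j + 2 ≤ m) :
    Nat.choose m j * Nat.choose m (j+2) ≤ Nat.choose m (j+1) ^ 2 := by
  have e1 := Nat.choose_succ_right_eq m j
  have e2 := Nat.choose_succ_right_eq m (j+1)
  have key : (Nat.choose m j * Nat.choose m (j+2)) * ((j+2) * (m-j)) =
      (Nat.choose m (j+1) ^ 2) * ((m-(j+1)) * (j+1)) := by
    calc (Nat.choose m j * Nat.choose m (j+2)) * ((j+2) * (m-j))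
        = (Nat.choose m j * (m-j)) * (Nat.choose m (j+2) * (j+2)) := by ring
      _ = (Nat.choose m (j+1) * (j+1)) * (Nat.choose m (j+1) * (m-(j+1))) := by
          rw [← e1, e2]
      _ = (Nat.choose m (j+1) ^ 2) * ((m-(j+1)) * (j+1)) := by ring
  have hle : (m-(j+1)) * (j+1) ≤ (j+2) * (m-j) := by
    have h1 : m - (j+1) ≤ m - j := by omega
    calc (m-(j+1)) * (j+1) ≤ (m-j) * (j+2) :=
      Nat.mul_le_mul h1 (by omega)
    _ = (j+2) * (m-j) := Nat.mul_comm _ _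
  have hpos : 0 < (j+2) * (m-j) := by
    have : 0 < m - j := by omega
    positivity
  have := calc (Nat.choose m j * Nat.choose m (j+2)) * ((j+2) * (m-j))
      = (Nat.choose m (j+1) ^ 2) * ((m-(j+1)) * (j+1)) := key
    _ ≤ (Nat.choose m (j+1) ^ 2) * ((j+2) * (m-j)) := Nat.mul_le_mul_left _ hle
  exact Nat.le_of_mul_le_mul_right this hpos

/-- strict binomial ratio inequality -/
lemma choose_strict (m a b : ℕ) (hab : a < b) (hbm : b + 1 ≤ m) :
    Nat.choose m (b+1) * Nat.choose m a < Nat.choose m b * Nat.choose m (a+1) := by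
  have e1 := Nat.choose_succ_right_eq m b
  have e2 := Nat.choose_succ_right_eq m a
  have key : (Nat.choose m (b+1) * Nat.choose m a) * ((b+1) * (m-a)) =
      (Nat.choose m b * Nat.choose m (a+1)) * ((a+1) * (m-b)) := by
    calc (Nat.choose m (b+1) * Nat.choose m a) * ((b+1) * (m-a))
        = (Nat.choose m (b+1) * (b+1)) * (Nat.choose m a * (m-a)) := by ring
      _ = (Nat.choose m b * (m-b)) * (Nat.choose m (a+1) * (a+1)) := by
          rw [e1, ← e2]
      _ = (Nat.choose m b * Nat.choose m (a+1)) * ((a+1) * (m-b)) := by ring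
  have hK : (a+1) * (m-b) < (b+1) * (m-a) := by
    have h1 : 0 < m - b := by omega
    have h2 : m - b ≤ m - a := by omega
    calc (a+1) * (m-b) < (b+1) * (m-b) := (Nat.mul_lt_mul_right h1).mpr (by omega)
      _ ≤ (b+1) * (m-a) := Nat.mul_le_mul_left _ h2
  have hd : 0 < Nat.choose m b * Nat.choose m (a+1) :=
    Nat.mul_pos (Nat.choose_pos (by omega)) (Nat.choose_pos (by omega))
  have hK1 : 0 < (b+1) * (m-a) := by
    have : 0 < m - a := by omega
    positivity
  by_contra hcon
  push_neg at hcon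
  have : (Nat.choose m b * Nat.choose m (a+1)) * ((a+1) * (m-b)) <
      (Nat.choose m (b+1) * Nat.choose m a) * ((b+1) * (m-a)) := by
    calc (Nat.choose m b * Nat.choose m (a+1)) * ((a+1) * (m-b))
        < (Nat.choose m b * Nat.choose m (a+1)) * ((b+1) * (m-a)) :=
          (Nat.mul_lt_mul_left hd).mpr hK
      _ ≤ (Nat.choose m (b+1) * Nat.choose m a) * ((b+1) * (m-a)) :=
          Nat.mul_le_mul_right _ hcon
  omega

/-- main reduced positivity: `λ ∈ Γ_k ⇒ σ_{k-1}(λ|i) > 0`. -/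
theorem red_pos (n : ℕ) : ∀ k : ℕ, 1 ≤ k → k ≤ n → ∀ lam : Fin n → ℝ,
    lam ∈ GammaCone n k → ∀ i : Fin n, 0 < (redM n lam i).esymm (k - 1) := by
  intro k
  induction k using Nat.strong_induction_on with
  | _ k IHk =>
    intro hk1 hkn lam hlam i
    rcases Nat.lt_or_ge k 2 with hk2 | hk2
    · have : k = 1 := by omega
      subst this
      simp [esymm_zero']
    · set M := redM n lam i with hM
      have hcard : Multiset.card M = n - 1 := card_redM n lam i
      have hlow : ∀ r : ℕ, r ≤ k - 2 → 0 < M.esymm r := by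
        intro r hr
        rcases Nat.eq_zero_or_pos r with rfl | hrpos
        · simp [esymm_zero']
        · have h := IHk (r+1) (by omega) (by omega) (by omega) lam
            (fun j hj1 hj2 => hlam j hj1 (by omega)) i
          simpa using h
      have hb : 0 < M.esymm (k-2) := hlow (k-2) le_rfl
      have h1 := hlam (k-1) (by omega) (by omega)
      have h2 := hlam k hk1 le_rfl
      rw [show k - 1 = (k-2)+1 by omega, esymm_split n lam i (k-2)] at h1
      rw [show k = (k-1)+1 by omega, esymm_split n lam i (k-1)] at h2
      rw [show (k-2)+1 = k-1 by omega] at h1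
      rw [show (k-1)+1 = k by omega] at h2
      rw [← hM] at h1 h2
      by_contra hneg
      push_neg at hneg
      have hlami : 0 < lam i := by nlinarith
      rcases Nat.lt_or_ge (n-1) k with hnk | hnk
      · -- k > n - 1, so esymm k M = 0
        have hz : M.esymm k = 0 := esymm_eq_zero M (by omega)
        rw [hz] at h2
        nlinarith
      · -- Newton case
        have hN := newton (n-1) M hcard (k-2) (by omega)
        rw [show (k-2)+1 = k-1 by omega, show (k-2)+2 = k by omega] at hN
        have hLC := choose_log_concave (n-1) (k-2) (by omega)
        rw [show (k-2)+1 = k-1 by omega, show (k-2)+2 = k by omega] at hLC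
        have hLC' : (Nat.choose (n-1) (k-2) : ℝ) * (Nat.choose (n-1) k : ℝ) ≤
            (Nat.choose (n-1) (k-1) : ℝ)^2 := by exact_mod_cast hLC
        set x := M.esymm (k-1) with hxdef
        have hx : (0:ℝ) ≤ -x := by linarith
        have hkey : x^2 < M.esymm (k-2) * M.esymm k := by
          nlinarith [mul_nonneg h1.le hx, mul_pos hb h2]
        have hBB : (0:ℝ) < ((Nat.choose (n-1) (k-1):ℝ))^2 := by
          have : 0 < Nat.choose (n-1) (k-1) := Nat.choose_pos (by omega)
          have h' : (0:ℝ) < (Nat.choose (n-1) (k-1):ℝ) := by exact_mod_cast this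
          positivity
        have hfin := mul_lt_mul_of_pos_left hkey hBB
        nlinarith [hN, mul_le_mul_of_nonneg_right hLC' (sq_nonneg x), hfin]


lemma chain (p : ℕ → ℝ) (l : ℕ) (hl : 1 ≤ l) :
    ∀ k, l < k → (∀ r, r ≤ k → 0 < p r) →
      (∀ r, 1 ≤ r → r + 1 ≤ k → p (r-1) * p (r+1) ≤ p r ^ 2) →
      p k * p (l-1) ≤ p (k-1) * p l := by
  intro k
  induction k with
  | zero => intro h; omega
  | succ k ih =>
    intro hlk hpos hnewt
    by_cases hc : l = k
    · subst hc
      have h := hnewt l hl (by omega)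
      rw [show l + 1 - 1 = l by omega]
      nlinarith [h]
    · have hlk' : l < k := by omega
      have ih' := ih hlk' (fun r hr => hpos r (by omega)) (fun r h1 h2 => hnewt r h1 (by omega))
      have hN := hnewt k (by omega) (by omega)
      rw [show k + 1 - 1 = k by omega]
      have hpk1 : 0 < p (k+1) := hpos (k+1) le_rfl
      have hpk : 0 < p k := hpos k (by omega)
      have hpkm : 0 < p (k-1) := hpos (k-1) (by omega)
      have hpl : 0 < p l := hpos l (by omega)
      have hplm : 0 < p (l-1) := hpos (l-1) (by omega)
      nlinarith [mul_le_mul_of_nonneg_right hN hplm.le,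
        mul_le_mul_of_nonneg_left ih' hpk.le, mul_pos hpkm hpl]

theorem num_lt (n k l : ℕ) (hl : 1 ≤ l) (hlk : l < k) (hkn : k ≤ n)
    (lam : Fin n → ℝ) (hlam : lam ∈ GammaCone n k) (i : Fin n) :
    (redM n lam i).esymm k * (redM n lam i).esymm (l-1) <
      (redM n lam i).esymm (k-1) * (redM n lam i).esymm l := by
  set M := redM n lam i with hM
  have hcard : Multiset.card M = n - 1 := card_redM n lam i
  have hMr : ∀ r, r ≤ k - 1 → 0 < M.esymm r := by
    intro r hr
    rcases Nat.eq_zero_or_pos r with rfl | hrpos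
    · simp [esymm_zero']
    · have h := red_pos n (r+1) (by omega) (by omega) lam
        (fun j hj1 hj2 => hlam j hj1 (by omega)) i
      simpa using h
  rcases le_or_gt (M.esymm k) 0 with hMk | hMk
  · have h1 := hMr (k-1) le_rfl
    have h2 := hMr l (by omega)
    have h3 := hMr (l-1) (by omega)
    nlinarith [mul_pos h1 h2, mul_nonneg (neg_nonneg.mpr hMk) h3.le]
  · have hkm : k ≤ n - 1 := by
      by_contra hcon
      push_neg at hcon
      have := esymm_eq_zero M (k := k) (by omega)
      rw [this] at hMk
      exact lt_irrefl 0 hMk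
    set m := n - 1 with hm
    set p : ℕ → ℝ := fun r => M.esymm r / (Nat.choose m r : ℝ) with hp
    have hch : ∀ r, r ≤ k → (0:ℝ) < (Nat.choose m r : ℝ) := by
      intro r hr
      have : 0 < Nat.choose m r := Nat.choose_pos (by omega)
      exact_mod_cast this
    have hppos : ∀ r, r ≤ k → 0 < p r := by
      intro r hr
      apply div_pos _ (hch r hr)
      rcases eq_or_lt_of_le hr with rfl | hlt
      · exact hMk
      · exact hMr r (by omega)
    have hpnewt : ∀ r, 1 ≤ r → r + 1 ≤ k → p (r-1) * p (r+1) ≤ p r ^ 2 := by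
      intro r h1 h2
      have hN := newton m M hcard (r-1) (by omega)
      rw [show (r-1)+1 = r by omega, show (r-1)+2 = r+1 by omega] at hN
      rw [hp]
      simp only
      have d1 : (0:ℝ) < (Nat.choose m (r-1) : ℝ) * (Nat.choose m (r+1) : ℝ) :=
        mul_pos (hch (r-1) (by omega)) (hch (r+1) (by omega))
      have d2 : (0:ℝ) < ((Nat.choose m r : ℝ))^2 := by
        have := hch r (by omega); positivity
      rw [div_mul_div_comm, div_pow, div_le_div_iff₀ d1 d2]
      nlinarith [hN]
    have hchain := chain p l hl k hlk hppos hpnewt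
    have hCS := choose_strict m (l-1) (k-1) (by omega) (by omega)
    rw [show (k-1)+1 = k by omega, show (l-1)+1 = l by omega] at hCS
    have hCS' : (Nat.choose m k : ℝ) * (Nat.choose m (l-1) : ℝ) <
        (Nat.choose m (k-1) : ℝ) * (Nat.choose m l : ℝ) := by exact_mod_cast hCS
    have hs : ∀ r, r ≤ k → M.esymm r = p r * (Nat.choose m r : ℝ) := by
      intro r hr
      rw [hp]
      simp only
      rw [div_mul_cancel₀]
      exact ne_of_gt (hch r hr)
    rw [hs k le_rfl, hs (k-1) (by omega), hs l (by omega), hs (l-1) (by omega)]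
    have hppk := hppos k le_rfl
    have hppk1 := hppos (k-1) (by omega)
    have hppl := hppos l (by omega)
    have hppl1 := hppos (l-1) (by omega)
    have hA := hch k le_rfl
    have hB := hch (k-1) (by omega)
    have hC := hch l (by omega)
    have hD := hch (l-1) (by omega)
    have step1 : (p k * p (l-1)) * ((Nat.choose m k : ℝ) * (Nat.choose m (l-1) : ℝ)) ≤
        (p (k-1) * p l) * ((Nat.choose m k : ℝ) * (Nat.choose m (l-1) : ℝ)) :=
      mul_le_mul_of_nonneg_right hchain (by positivity)
    have step2 : (p (k-1) * p l) * ((Nat.choose m k : ℝ) * (Nat.choose m (l-1) : ℝ)) <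
        (p (k-1) * p l) * ((Nat.choose m (k-1) : ℝ) * (Nat.choose m l : ℝ)) :=
      mul_lt_mul_of_pos_left hCS' (mul_pos hppk1 hppl)
    nlinarith [step1, step2]




/-- The derivative of `esymm n k` at `lam`. -/
noncomputable def Dsig (n k : ℕ) (lam : Fin n → ℝ) : (Fin n → ℝ) →L[ℝ] ℝ :=
  ∑ s ∈ Finset.powersetCard k (Finset.univ : Finset (Fin n)),
    ∑ j ∈ s, (∏ t ∈ s.erase j, lam t) • (ContinuousLinearMap.proj j)

lemma hasfd (n k : ℕ) (lam : Fin n → ℝ) :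
    HasFDerivAt (esymm n k) (Dsig n k lam) lam := by
  apply HasFDerivAt.fun_sum
  intro s _
  exact HasFDerivAt.finset_prod
    (fun j _ => (ContinuousLinearMap.proj j : (Fin n → ℝ) →L[ℝ] ℝ).hasFDerivAt)

lemma Dsig_apply_single (n k : ℕ) (lam : Fin n → ℝ) (i : Fin n) :
    Dsig n (k+1) lam (Pi.single i 1) = (redM n lam i).esymm k := by
  classical
  rw [Dsig]
  rw [ContinuousLinearMap.sum_apply]
  have hterm : ∀ s ∈ Finset.powersetCard (k+1) (Finset.univ : Finset (Fin n)),
      (∑ j ∈ s, (∏ t ∈ s.erase j, lam t) • (ContinuousLinearMap.proj j :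
          (Fin n → ℝ) →L[ℝ] ℝ)) (Pi.single i 1)
        = if i ∈ s then ∏ t ∈ s.erase i, lam t else 0 := by
    intro s _
    rw [ContinuousLinearMap.sum_apply]
    have : ∀ j ∈ s, ((∏ t ∈ s.erase j, lam t) • (ContinuousLinearMap.proj j :
        (Fin n → ℝ) →L[ℝ] ℝ)) (Pi.single i 1) =
        if j = i then ∏ t ∈ s.erase j, lam t else 0 := by
      intro j _
      rw [ContinuousLinearMap.smul_apply, ContinuousLinearMap.proj_apply, Pi.single_apply]
      split <;> simp
    rw [Finset.sum_congr rfl this]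
    rw [Finset.sum_ite_eq' s i (fun j => ∏ t ∈ s.erase j, lam t)]
  rw [Finset.sum_congr rfl hterm]
  have huniv : (Finset.univ : Finset (Fin n)) = insert i (Finset.univ.erase i) :=
    (Finset.insert_erase (Finset.mem_univ i)).symm
  rw [huniv, Finset.powersetCard_succ_insert (Finset.notMem_erase i _)]
  have hdisj : Disjoint ((Finset.univ.erase i).powersetCard (k+1))
      (((Finset.univ.erase i).powersetCard k).image (insert i)) := by
    rw [Finset.disjoint_left]
    intro s hs1 hs2
    have h1 : i ∉ s := fun hi =>
      (Finset.notMem_erase i Finset.univ) ((Finset.mem_powersetCard.mp hs1).1 hi)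
    obtain ⟨u, _, rfl⟩ := Finset.mem_image.mp hs2
    exact h1 (Finset.mem_insert_self i u)
  rw [Finset.sum_union hdisj]
  have hzero : ∑ s ∈ (Finset.univ.erase i).powersetCard (k+1),
      (if i ∈ s then ∏ t ∈ s.erase i, lam t else 0) = 0 := by
    apply Finset.sum_eq_zero
    intro s hs
    have h1 : i ∉ s := fun hi =>
      (Finset.notMem_erase i Finset.univ) ((Finset.mem_powersetCard.mp hs).1 hi)
    rw [if_neg h1]
  rw [hzero, zero_add]
  have hinj : ∀ a ∈ (Finset.univ.erase i).powersetCard k,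
      ∀ b ∈ (Finset.univ.erase i).powersetCard k, insert i a = insert i b → a = b := by
    intro a ha b hb hab
    have hia : i ∉ a := fun hi =>
      (Finset.notMem_erase i Finset.univ) ((Finset.mem_powersetCard.mp ha).1 hi)
    have hib : i ∉ b := fun hi =>
      (Finset.notMem_erase i Finset.univ) ((Finset.mem_powersetCard.mp hb).1 hi)
    rw [← Finset.erase_insert hia, hab, Finset.erase_insert hib]
  rw [Finset.sum_image hinj]
  have hterm2 : ∀ u ∈ (Finset.univ.erase i).powersetCard k,
      (if i ∈ insert i u then ∏ t ∈ (insert i u).erase i, lam t else 0) =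
        ∏ t ∈ u, lam t := by
    intro u hu
    have hiu : i ∉ u := fun hi =>
      (Finset.notMem_erase i Finset.univ) ((Finset.mem_powersetCard.mp hu).1 hi)
    rw [if_pos (Finset.mem_insert_self i u), Finset.erase_insert hiu]
  rw [Finset.sum_congr rfl hterm2, redM, Finset.esymm_map_val]

end QOSE

/-- Proposition 2.4, first part: for `0 ≤ l < k ≤ n` and `λ ∈ Γ_k`, each partial
derivative of `μ ↦ σ_k(μ)/σ_l(μ)` is strictly positive at `λ`. -/
theorem quotient_operator_strictly_elliptic (n k l : ℕ) (hn : 2 ≤ n) (hlk : l < k)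
    (hkn : k ≤ n) (lam : Fin n → ℝ) (hlam : lam ∈ GammaCone n k) (i : Fin n) :
    0 < fderiv ℝ (fun mu : Fin n → ℝ => esymm n k mu / esymm n l mu) lam
          (Pi.single i 1) := by
  classical
  obtain ⟨k', rfl⟩ : ∃ k', k = k' + 1 := ⟨k - 1, by omega⟩
  rcases Nat.eq_zero_or_pos l with rfl | hl1
  · -- l = 0 : denominator is constantly 1
    have hfun : (fun mu : Fin n → ℝ => esymm n (k'+1) mu / esymm n 0 mu) =
        esymm n (k'+1) := by
      funext mu
      have h0 : esymm n 0 mu = 1 := by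
        rw [show esymm n 0 mu = ∑ s ∈ Finset.powersetCard 0 (Finset.univ : Finset (Fin n)),
          ∏ j ∈ s, mu j from rfl, Finset.powersetCard_zero]
        simp
      rw [h0, div_one]
    rw [hfun, (QOSE.hasfd n (k'+1) lam).fderiv, QOSE.Dsig_apply_single]
    have := QOSE.red_pos n (k'+1) (by omega) hkn lam hlam i
    simpa using this
  · obtain ⟨l', rfl⟩ : ∃ l', l = l' + 1 := ⟨l - 1, by omega⟩
    set σk := esymm n (k'+1) lam with hσk
    set σl := esymm n (l'+1) lam with hσl
    have hσlpos : 0 < σl := hlam (l'+1) (by omega) (by omega)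
    have hσlne : σl ≠ 0 := ne_of_gt hσlpos
    have hk := QOSE.hasfd n (k'+1) lam
    have hlf := QOSE.hasfd n (l'+1) lam
    have hinv := (hasFDerivAt_inv hσlne).comp lam hlf
    have hmul := hk.mul hinv
    have hmul' : HasFDerivAt (fun mu : Fin n → ℝ =>
        esymm n (k'+1) mu * (esymm n (l'+1) mu)⁻¹)
        (σk • ((ContinuousLinearMap.smulRight (1 : ℝ →L[ℝ] ℝ) (-(σl ^ 2)⁻¹)).comp
            (QOSE.Dsig n (l'+1) lam)) + σl⁻¹ • QOSE.Dsig n (k'+1) lam) lam := hmul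
    have hfun : (fun mu : Fin n → ℝ => esymm n (k'+1) mu / esymm n (l'+1) mu) =
        (fun mu : Fin n → ℝ => esymm n (k'+1) mu * (esymm n (l'+1) mu)⁻¹) := by
      funext mu
      rw [div_eq_mul_inv]
    rw [hfun, hmul'.fderiv]
    set M := QOSE.redM n lam i with hMdef
    have hU : QOSE.Dsig n (k'+1) lam (Pi.single i 1) = M.esymm k' :=
      QOSE.Dsig_apply_single n k' lam i
    have hW : QOSE.Dsig n (l'+1) lam (Pi.single i 1) = M.esymm l' :=
      QOSE.Dsig_apply_single n l' lam i
    rw [ContinuousLinearMap.add_apply, ContinuousLinearMap.smul_apply,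
      ContinuousLinearMap.smul_apply, ContinuousLinearMap.comp_apply,
      ContinuousLinearMap.smulRight_apply, ContinuousLinearMap.one_apply, hU, hW]
    have hval : σk • (M.esymm l' • -(σl ^ 2)⁻¹) + σl⁻¹ • M.esymm k' =
        (σl * M.esymm k' - σk * M.esymm l') / σl ^ 2 := by
      field_simp
      have e1 : σl ^ 2 * (1 / σl ^ 2) = 1 := by rw [one_div, mul_inv_cancel₀ (pow_ne_zero 2 hσlne)]
      have e2 : σl ^ 2 * (1 / σl) = σl := by rw [one_div, sq, mul_inv_cancel_right₀ hσlne]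
      simp only [smul_eq_mul]
      linear_combination (-σk * M.esymm l') * e1 + M.esymm k' * e2
    rw [hval]
    apply div_pos
    · -- numerator positive
      have hsplitk : σk = M.esymm (k'+1) + lam i * M.esymm k' := QOSE.esymm_split n lam i k'
      have hsplitl : σl = M.esymm (l'+1) + lam i * M.esymm l' := QOSE.esymm_split n lam i l'
      have hnum := QOSE.num_lt n (k'+1) (l'+1) (by omega) hlk hkn lam hlam i
      rw [show k'+1-1 = k' by omega, show l'+1-1 = l' by omega] at hnum
      rw [hsplitk, hsplitl]
      nlinarith [hnum]
    · positivity
end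

section
/- (Proposition 2.4, second part.) Let n ≥ 2 and 2 ≤ k ≤ n. For every λ ∈ Γ_{k-1} and every index i ∈ {1,…,n}, the partial derivative with respect to the i-th coordinate of the function μ ↦ σ_k(μ)/σ_{k-1}(μ) is nonnegative at λ. (The function is well defined and smooth on the open set Γ_{k-1}, since σ_{k-1} > 0 on Γ_{k-1}.) -/
open Finset Polynomial


/-- Sum of "drop one element" products equals the elementary symmetric sum at `card - 1`. -/
lemma drop_one_sum {ι : Type*} [DecidableEq ι] (s : Finset ι) (hs : s.Nonempty) (f : ι → ℝ) :
    ∑ j ∈ s, ∏ l ∈ s.erase j, f l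
      = ∑ t ∈ s.powersetCard (s.card - 1), ∏ l ∈ t, f l := by
  have himg : s.powersetCard (s.card - 1) = s.image s.erase := by
    ext t
    simp only [Finset.mem_powersetCard, Finset.mem_image]
    constructor
    · rintro ⟨hts, hcard⟩
      have hc1 : 1 ≤ s.card := Finset.card_pos.mpr hs
      have hcard1 : (s \ t).card = 1 := by
        rw [Finset.card_sdiff_of_subset hts, hcard]
        omega
      obtain ⟨j, hj⟩ := Finset.card_eq_one.mp hcard1
      have hjs : j ∈ s := by
        have : j ∈ s \ t := hj ▸ Finset.mem_singleton_self j
        exact (Finset.mem_sdiff.mp this).1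
      refine ⟨j, hjs, ?_⟩
      rw [Finset.erase_eq, ← hj, Finset.sdiff_sdiff_self_left]
      exact Finset.inter_eq_right.mpr hts
    · rintro ⟨j, hj, rfl⟩
      exact ⟨Finset.erase_subset _ _, by rw [Finset.card_erase_of_mem hj]⟩
  rw [himg, Finset.sum_image]
  intro x hx y hy h
  exact (Finset.erase_inj s hx).mp h

/-- Double-counting: summing the `m`-subsets avoiding each point counts each
`m`-subset `card s - m` times. -/
lemma avoid_sum {ι : Type*} [DecidableEq ι] (s : Finset ι) (m : ℕ) (f : ι → ℝ) :
    ∑ i ∈ s, ∑ t ∈ (s.erase i).powersetCard m, ∏ l ∈ t, f l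
      = ((s.card - m : ℕ) : ℝ) * ∑ t ∈ s.powersetCard m, ∏ l ∈ t, f l := by
  have h1 : ∀ i : ι, (s.erase i).powersetCard m
      = (s.powersetCard m).filter (fun t => i ∉ t) := by
    intro i; ext t
    simp only [Finset.mem_powersetCard, Finset.mem_filter, Finset.subset_erase]
    tauto
  simp_rw [h1, Finset.sum_filter]
  rw [Finset.sum_comm, Finset.mul_sum]
  refine Finset.sum_congr rfl fun t ht => ?_
  rw [← Finset.sum_filter, Finset.sum_const, ← Finset.sdiff_eq_filter,
    Finset.card_sdiff_of_subset (Finset.mem_powersetCard.mp ht).1,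
    (Finset.mem_powersetCard.mp ht).2, nsmul_eq_mul]

lemma prod_erase_mul_prod_erase {ι : Type*} [DecidableEq ι] [Fintype ι] (f : ι → ℝ)
    {i j : ι} (hij : i ≠ j) :
    (∏ l ∈ univ.erase i, f l) * ∏ l ∈ univ.erase j, f l
      = (∏ l, f l) * ∏ l ∈ (univ.erase i).erase j, f l := by
  have hj : j ∈ (univ : Finset ι).erase i := Finset.mem_erase.mpr ⟨hij.symm, mem_univ j⟩
  have hi : i ∈ (univ : Finset ι).erase j := Finset.mem_erase.mpr ⟨hij, mem_univ i⟩
  rw [← Finset.mul_prod_erase _ f hj, ← Finset.mul_prod_erase _ f hi,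
    Finset.erase_right_comm (a := j) (b := i),
    ← Finset.mul_prod_erase _ f (Finset.mem_univ i), ← Finset.mul_prod_erase _ f hj]
  ring

/-- Newton's inequality at the top, for `b+2` real variables. -/
lemma newton_top (b : ℕ) (f : Fin (b + 2) → ℝ) :
    2 * ((b : ℝ) + 2) * (esymm (b + 2) (b + 2) f * esymm (b + 2) b f)
      ≤ ((b : ℝ) + 1) * esymm (b + 2) (b + 1) f ^ 2 := by
  classical
  set P : Fin (b + 2) → ℝ := fun i => ∏ l ∈ univ.erase i, f l with hP
  have hcard : (univ : Finset (Fin (b + 2))).card = b + 2 := by simp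
  have h1 : esymm (b + 2) (b + 1) f = ∑ i, P i := by
    have hd := drop_one_sum (univ : Finset (Fin (b + 2))) univ_nonempty f
    rw [hcard, show b + 2 - 1 = b + 1 by omega] at hd
    rw [esymm, ← hd]
  have h2 : esymm (b + 2) (b + 2) f = ∏ l, f l := by
    have hps := Finset.powersetCard_self (univ : Finset (Fin (b + 2)))
    rw [hcard] at hps
    rw [esymm, hps, Finset.sum_singleton]
  have hpair : ∀ i : Fin (b + 2), ∑ j ∈ univ.erase i, P i * P j
      = (∏ l, f l) * ∑ t ∈ (univ.erase i).powersetCard b, ∏ l ∈ t, f l := by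
    intro i
    have hne : (univ.erase i).Nonempty := by
      rw [← Finset.card_pos, Finset.card_erase_of_mem (mem_univ i), hcard]
      omega
    have hcarde : (univ.erase i).card = b + 1 := by
      rw [Finset.card_erase_of_mem (mem_univ i), hcard]
      omega
    calc ∑ j ∈ univ.erase i, P i * P j
        = ∑ j ∈ univ.erase i, (∏ l, f l) * ∏ l ∈ (univ.erase i).erase j, f l := by
          refine Finset.sum_congr rfl fun j hj => ?_
          exact prod_erase_mul_prod_erase f (Finset.mem_erase.mp hj).1.symm
      _ = (∏ l, f l) * ∑ j ∈ univ.erase i, ∏ l ∈ (univ.erase i).erase j, f l := by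
          rw [Finset.mul_sum]
      _ = (∏ l, f l) * ∑ t ∈ (univ.erase i).powersetCard b, ∏ l ∈ t, f l := by
          rw [drop_one_sum _ hne f, hcarde]
          norm_num
  have h3 : (∑ i, P i) ^ 2 - ∑ i, P i ^ 2 = 2 * ((∏ l, f l) * esymm (b + 2) b f) := by
    have expand : (∑ i, P i) ^ 2
        = ∑ i, P i ^ 2 + ∑ i, ∑ j ∈ univ.erase i, P i * P j := by
      rw [sq, Finset.sum_mul, ← Finset.sum_add_distrib]
      refine Finset.sum_congr rfl fun i _ => ?_
      rw [Finset.mul_sum, ← Finset.add_sum_erase _ _ (mem_univ i), sq]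
    rw [expand]
    ring_nf
    simp_rw [hpair]
    rw [← Finset.mul_sum, avoid_sum univ b f, hcard]
    have : (b + 2 - b : ℕ) = 2 := by omega
    rw [this, esymm]
    push_cast
    ring
  have hCS : (∑ i, P i) ^ 2 ≤ ((b : ℝ) + 2) * ∑ i, P i ^ 2 := by
    have := sq_sum_le_card_mul_sum_sq (s := (univ : Finset (Fin (b + 2)))) (f := P)
    simpa [hcard] using this
  rw [h1, h2]
  nlinarith [h3, hCS]

/-- One derivative preserves "all roots real" (counted with multiplicity), and
drops the degree by one. -/
lemma deriv_real_rooted (p : ℝ[X]) (h : Multiset.card p.roots = p.natDegree) :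
    Multiset.card (derivative p).roots = (derivative p).natDegree
      ∧ (derivative p).natDegree = p.natDegree - 1 := by
  by_cases h0 : p.natDegree = 0
  · obtain ⟨c, rfl⟩ := Polynomial.natDegree_eq_zero.mp h0
    simp
  · have hp : p ≠ 0 := fun hz => h0 (by simp [hz])
    obtain ⟨d, hd⟩ : ∃ d, p.natDegree = d + 1 := ⟨p.natDegree - 1, by omega⟩
    have hlc : p.coeff (d + 1) ≠ 0 := by
      rw [← hd]
      exact Polynomial.leadingCoeff_ne_zero.mpr hp
    have hcoeff : (derivative p).coeff d ≠ 0 := by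
      rw [Polynomial.coeff_derivative]
      exact mul_ne_zero hlc (by positivity)
    have hdeg_ge : d ≤ (derivative p).natDegree :=
      Polynomial.le_natDegree_of_ne_zero hcoeff
    have hdeg_le : (derivative p).natDegree ≤ d := by
      have := Polynomial.natDegree_derivative_le p
      omega
    have hdeg : (derivative p).natDegree = d := le_antisymm hdeg_le hdeg_ge
    have hub : Multiset.card (derivative p).roots ≤ d :=
      hdeg ▸ Polynomial.card_roots' (derivative p)
    have hlb := Polynomial.card_roots_le_derivative p
    constructor
    · rw [hdeg]; omega
    · omega

lemma iter_deriv_real_rooted (p : ℝ[X]) (h : Multiset.card p.roots = p.natDegree) (j : ℕ) :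
    Multiset.card (derivative^[j] p).roots = (derivative^[j] p).natDegree
      ∧ (derivative^[j] p).natDegree = p.natDegree - j := by
  induction j with
  | zero => simpa using h
  | succ m ih =>
    rw [Function.iterate_succ_apply']
    obtain ⟨ih1, ih2⟩ := ih
    obtain ⟨c1, c2⟩ := deriv_real_rooted _ ih1
    exact ⟨c1, by omega⟩

/-- For a real-rooted polynomial of degree `b+2`, a Newton-type inequality holds
for the three lowest coefficients. -/
lemma quad_coeff_ineq (b : ℕ) (g : ℝ[X]) (hdeg : g.natDegree = b + 2)
    (hroots : Multiset.card g.roots = g.natDegree) :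
    2 * ((b : ℝ) + 2) * (g.coeff 0 * g.coeff 2) ≤ ((b : ℝ) + 1) * g.coeff 1 ^ 2 := by
  classical
  set l : List ℝ := g.roots.toList with hl
  have hlen : l.length = b + 2 := by
    rw [hl, Multiset.length_toList, hroots, hdeg]
  set f : Fin (b + 2) → ℝ := fun i => - l.get (Fin.cast hlen.symm i) with hf
  have hprod : g = C g.leadingCoeff * ∏ i : Fin (b + 2), (X + C (f i)) := by
    conv_lhs => rw [← Polynomial.C_leadingCoeff_mul_prod_multiset_X_sub_C hroots]
    congr 1
    have h1 : g.roots = (l : Multiset ℝ) := (Multiset.coe_toList _).symm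
    rw [h1, Multiset.map_coe, Multiset.prod_coe]
    rw [show (List.map (fun a => X - C a) l)
        = List.ofFn ((fun a => X - C a) ∘ l.get) by
      rw [← List.map_ofFn, List.ofFn_get]]
    rw [List.prod_ofFn]
    refine (Fintype.prod_equiv (finCongr hlen.symm) _ _ ?_).symm
    intro i
    simp only [hf, finCongr_apply, map_neg, sub_eq_add_neg, Function.comp_apply]
  have hcoeff : ∀ m : ℕ, m ≤ b + 2 →
      g.coeff m = g.leadingCoeff * esymm (b + 2) (b + 2 - m) f := by
    intro m hm
    conv_lhs => rw [hprod]
    rw [Polynomial.coeff_C_mul, Finset.prod_X_add_C_coeff univ f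
      (by simpa using hm)]
    simp only [esymm, Finset.card_univ, Fintype.card_fin]
  have h0 := hcoeff 0 (by omega)
  have h1 := hcoeff 1 (by omega)
  have h2 := hcoeff 2 (by omega)
  rw [show b + 2 - 1 = b + 1 by omega] at h1
  rw [show b + 2 - 2 = b by omega] at h2
  rw [show b + 2 - 0 = b + 2 by omega] at h0
  have hnt := newton_top b f
  rw [h0, h1, h2]
  nlinarith [mul_le_mul_of_nonneg_left hnt (sq_nonneg g.leadingCoeff)]

/-- Newton's inequality (unnormalized) for elementary symmetric sums over a finite
index set, for arbitrary real values. -/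
lemma newton_finset {ι : Type*} [DecidableEq ι] (A : Finset ι) (lam : ι → ℝ) (b : ℕ) :
    (∑ t ∈ A.powersetCard (b + 2), ∏ l ∈ t, lam l)
        * (∑ t ∈ A.powersetCard b, ∏ l ∈ t, lam l)
      ≤ (∑ t ∈ A.powersetCard (b + 1), ∏ l ∈ t, lam l) ^ 2 := by
  classical
  by_cases hbig : A.card < b + 2
  · rw [Finset.powersetCard_eq_empty.mpr hbig, Finset.sum_empty, zero_mul]
    positivity
  push_neg at hbig
  obtain ⟨a, ha⟩ : ∃ a, A.card = b + 2 + a := ⟨A.card - (b + 2), by omega⟩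
  set P : ℝ[X] := ∏ j ∈ A, (X + C (lam j)) with hPdef
  have hPdeg : P.natDegree = A.card := by
    rw [hPdef, Polynomial.natDegree_prod _ _ (fun j _ => Polynomial.X_add_C_ne_zero (lam j))]
    simp [Polynomial.natDegree_X_add_C]
  have hPsplits : Multiset.card P.roots = P.natDegree := by
    rw [← Polynomial.splits_iff_card_roots]
    exact Polynomial.Splits.prod fun j _ =>
      Polynomial.Splits.of_natDegree_le_one (by simp [Polynomial.natDegree_X_add_C])
  obtain ⟨hgroots, hgdeg⟩ := iter_deriv_real_rooted P hPsplits a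
  set g : ℝ[X] := derivative^[a] P with hgdef
  have hgdeg2 : g.natDegree = b + 2 := by rw [hgdeg, hPdeg]; omega
  have hgc : ∀ m : ℕ, m + a ≤ A.card →
      g.coeff m = (((m + a).descFactorial a : ℕ) : ℝ)
        * ∑ t ∈ A.powersetCard (A.card - (m + a)), ∏ l ∈ t, lam l := by
    intro m hm
    rw [hgdef, Polynomial.coeff_iterate_derivative,
      Finset.prod_X_add_C_coeff A lam hm, nsmul_eq_mul]
  have h0 := hgc 0 (by omega)
  have h1 := hgc 1 (by omega)
  have h2 := hgc 2 (by omega)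
  rw [show (0 + a) = a by omega, show A.card - a = b + 2 by omega] at h0
  rw [show (1 + a) = a + 1 by omega, show A.card - (a + 1) = b + 1 by omega] at h1
  rw [show (2 + a) = a + 2 by omega, show A.card - (a + 2) = b by omega] at h2
  -- descFactorial values
  have hD0 : a.descFactorial a = a.factorial := Nat.descFactorial_self a
  have hD1 : (a + 1).descFactorial a = (a + 1).factorial := by
    have := Nat.descFactorial_self (a + 1)
    rwa [Nat.descFactorial_succ, show a + 1 - a = 1 by omega, one_mul] at this
  have hD2 : 2 * (a + 2).descFactorial a = (a + 2).factorial := by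
    have := Nat.descFactorial_self (a + 2)
    rwa [Nat.descFactorial_succ, show a + 2 - (a + 1) = 1 by omega, one_mul,
      Nat.descFactorial_succ, show a + 2 - a = 2 by omega] at this
  have hquad := quad_coeff_ineq b g hgdeg2 hgroots
  rw [h0, h1, h2, hD0, hD1] at hquad
  set S2 : ℝ := ∑ t ∈ A.powersetCard (b + 2), ∏ l ∈ t, lam l with hS2
  set S1 : ℝ := ∑ t ∈ A.powersetCard (b + 1), ∏ l ∈ t, lam l with hS1
  set S0 : ℝ := ∑ t ∈ A.powersetCard b, ∏ l ∈ t, lam l with hS0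
  set F : ℝ := (a.factorial : ℝ) with hF
  have hFpos : 0 < F := by positivity
  have hfac1 : ((a + 1).factorial : ℝ) = ((a : ℝ) + 1) * F := by
    rw [hF, Nat.factorial_succ]; push_cast; ring
  have hfac2 : (2 : ℝ) * (((a + 2).descFactorial a : ℕ) : ℝ) = ((a : ℝ) + 2) * ((a : ℝ) + 1) * F := by
    have : (((a + 2).factorial : ℕ) : ℝ) = ((a : ℝ) + 2) * ((a : ℝ) + 1) * F := by
      rw [hF, Nat.factorial_succ, Nat.factorial_succ]; push_cast; ring
    rw [← this, ← hD2]; push_cast; ring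
  rw [hfac1] at hquad
  set D2 : ℝ := (((a + 2).descFactorial a : ℕ) : ℝ) with hD2r
  set c1 : ℝ := 2 * ((b : ℝ) + 1) * (((a : ℝ) + 1) ^ 2) * F ^ 2 with hc1
  set c2 : ℝ := 2 * ((b : ℝ) + 2) * (((a : ℝ) + 2) * (((a : ℝ) + 1))) * F ^ 2 with hc2
  have key : c2 * (S2 * S0) ≤ c1 * S1 ^ 2 := by
    have h2q := mul_le_mul_of_nonneg_left hquad (by norm_num : (0 : ℝ) ≤ 2)
    calc c2 * (S2 * S0)
        = 2 * (2 * ((b : ℝ) + 2) * (F * S2 * (D2 * S0))) := by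
          rw [hc2]
          linear_combination (-(2 * ((b : ℝ) + 2) * F * S2 * S0)) * hfac2
      _ ≤ 2 * (((b : ℝ) + 1) * (((a : ℝ) + 1) * F * S1) ^ 2) := h2q
      _ = c1 * S1 ^ 2 := by rw [hc1]; ring
  by_cases hsgn : S2 * S0 ≤ 0
  · nlinarith [sq_nonneg S1]
  push_neg at hsgn
  have hcpos : (0 : ℝ) < c1 := by rw [hc1]; positivity
  have hmono : c1 ≤ c2 := by
    have ha' : (0 : ℝ) ≤ (a : ℝ) := Nat.cast_nonneg a
    have hb' : (0 : ℝ) ≤ (b : ℝ) := Nat.cast_nonneg b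
    have hcoef : 2 * ((b : ℝ) + 1) * (((a : ℝ) + 1) ^ 2)
        ≤ 2 * ((b : ℝ) + 2) * (((a : ℝ) + 2) * (((a : ℝ) + 1))) := by nlinarith
    rw [hc1, hc2]
    exact mul_le_mul_of_nonneg_right hcoef (sq_nonneg F)
  have step : c1 * (S2 * S0) ≤ c1 * S1 ^ 2 :=
    le_trans (mul_le_mul_of_nonneg_right hmono (le_of_lt hsgn)) key
  exact (mul_le_mul_iff_right₀ hcpos).mp step

/-- Splitting the elementary symmetric sum according to whether a subset
contains the index `i`. -/
lemma esymm_split (n : ℕ) (i : Fin n) (k : ℕ) (x : Fin n → ℝ) :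
    esymm n (k + 1) x
      = (∑ t ∈ (Finset.univ.erase i).powersetCard (k + 1), ∏ l ∈ t, x l)
        + x i * ∑ t ∈ (Finset.univ.erase i).powersetCard k, ∏ l ∈ t, x l := by
  classical
  have hins : (Finset.univ : Finset (Fin n)) = insert i (Finset.univ.erase i) :=
    (Finset.insert_erase (mem_univ i)).symm
  rw [esymm]
  conv_lhs => rw [hins]
  rw [Finset.powersetCard_succ_insert (Finset.notMem_erase i _) k]
  rw [Finset.sum_union]
  · congr 1
    rw [Finset.sum_image]
    · rw [Finset.mul_sum]
      refine Finset.sum_congr rfl fun t ht => ?_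
      rw [Finset.prod_insert]
      intro hit
      exact Finset.notMem_erase i _ ((Finset.mem_powersetCard.mp ht).1 hit)
    · intro t1 h1 t2 h2 heq
      have hi1 : i ∉ t1 := fun hc =>
        Finset.notMem_erase i _ ((Finset.mem_powersetCard.mp h1).1 hc)
      have hi2 : i ∉ t2 := fun hc =>
        Finset.notMem_erase i _ ((Finset.mem_powersetCard.mp h2).1 hc)
      rw [← Finset.erase_insert hi1, heq, Finset.erase_insert hi2]
  · rw [Finset.disjoint_left]
    intro t ht htm
    obtain ⟨t', ht', rfl⟩ := Finset.mem_image.mp htm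
    exact Finset.notMem_erase i _
      ((Finset.mem_powersetCard.mp ht).1 (Finset.mem_insert_self i t'))

/-- Proposition 2.4, second part: for `2 ≤ k ≤ n` and `λ ∈ Γ_{k-1}`, each partial
derivative of `μ ↦ σ_k(μ)/σ_{k-1}(μ)` is nonnegative at `λ`. -/
theorem quotient_operator_elliptic_on_lower_cone (n k : ℕ) (hn : 2 ≤ n) (hk : 2 ≤ k)
    (hkn : k ≤ n) (lam : Fin n → ℝ) (hlam : lam ∈ GammaCone n (k - 1)) (i : Fin n) :
    0 ≤ fderiv ℝ (fun mu : Fin n → ℝ => esymm n k mu / esymm n (k - 1) mu) lam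
          (Pi.single i 1) := by
  classical
  obtain ⟨b, rfl⟩ : ∃ b, k = b + 2 := ⟨k - 2, by omega⟩
  have hk1 : b + 2 - 1 = b + 1 := rfl
  set v : Fin n → ℝ := Pi.single i 1 with hv
  set A : Finset (Fin n) := Finset.univ.erase i with hA
  set e : ℕ → ℝ := fun j => ∑ t ∈ A.powersetCard j, ∏ l ∈ t, lam l with he
  -- the line through lam in direction v, coordinatewise
  have hcoord : ∀ (t : ℝ) (l : Fin n), l ≠ i → (lam + t • v) l = lam l := by
    intro t l hl
    simp [hv, Pi.single_eq_of_ne hl]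
  have hcoordi : ∀ t : ℝ, (lam + t • v) i = lam i + t := by
    intro t; simp [hv]
  have hsum_line : ∀ (t : ℝ) (j : ℕ),
      (∑ t' ∈ A.powersetCard j, ∏ l ∈ t', (lam + t • v) l) = e j := by
    intro t j
    refine Finset.sum_congr rfl fun t' ht' => Finset.prod_congr rfl fun l hl => ?_
    exact hcoord t l (Finset.ne_of_mem_erase ((Finset.mem_powersetCard.mp ht').1 hl))
  have hline : ∀ (t : ℝ) (j : ℕ),
      esymm n (j + 1) (lam + t • v) = e (j + 1) + (lam i + t) * e j := by
    intro t j
    rw [esymm_split n i j (lam + t • v), hsum_line, hsum_line, hcoordi]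
  -- 1-D derivatives
  have hnum : HasDerivAt (fun t : ℝ => esymm n (b + 2) (lam + t • v)) (e (b + 1)) 0 := by
    have hfun : (fun t : ℝ => esymm n (b + 2) (lam + t • v))
        = fun t => e (b + 2) + (lam i + t) * e (b + 1) := funext fun t => hline t (b + 1)
    rw [hfun]
    have h := (((hasDerivAt_id (0 : ℝ)).const_add (lam i)).mul_const (e (b + 1))).const_add
      (e (b + 2))
    simpa using h
  have hden : HasDerivAt (fun t : ℝ => esymm n (b + 1) (lam + t • v)) (e b) 0 := by
    have hfun : (fun t : ℝ => esymm n (b + 1) (lam + t • v))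
        = fun t => e (b + 1) + (lam i + t) * e b := funext fun t => hline t b
    rw [hfun]
    have h := (((hasDerivAt_id (0 : ℝ)).const_add (lam i)).mul_const (e b)).const_add (e (b + 1))
    simpa using h
  have h0line : lam + (0 : ℝ) • v = lam := by simp
  have hsig : 0 < esymm n (b + 1) lam := hlam (b + 1) (by omega) (by omega)
  have hsigne : esymm n (b + 1) lam ≠ 0 := ne_of_gt hsig
  have hden0 : (fun t : ℝ => esymm n (b + 1) (lam + t • v)) 0 = esymm n (b + 1) lam := by
    simp only [h0line]
  have hquot : HasDerivAt
      (fun t : ℝ => esymm n (b + 2) (lam + t • v) / esymm n (b + 1) (lam + t • v))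
      ((e (b + 1) * esymm n (b + 1) lam - esymm n (b + 2) lam * e b)
        / esymm n (b + 1) lam ^ 2) 0 := by
    have h := hnum.fun_div hden (by rw [h0line]; exact hsigne)
    simpa only [h0line] using h
  -- differentiability of the quotient map on ℝⁿ
  have hde : ∀ kk : ℕ, DifferentiableAt ℝ (fun mu : Fin n → ℝ => esymm n kk mu) lam := by
    intro kk
    apply DifferentiableAt.fun_sum
    intro s _
    exact (HasFDerivAt.finset_prod (u := s)
      (fun l _ => hasFDerivAt_apply (𝕜 := ℝ) l lam)).differentiableAt
  have hQdiff : DifferentiableAt ℝ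
      (fun mu : Fin n → ℝ => esymm n (b + 2) mu / esymm n (b + 1) mu) lam := by
    have heq : (fun mu : Fin n → ℝ => esymm n (b + 2) mu / esymm n (b + 1) mu)
        = fun mu => esymm n (b + 2) mu * (esymm n (b + 1) mu)⁻¹ :=
      funext fun mu => div_eq_mul_inv _ _
    rw [heq]
    exact (hde (b + 2)).mul ((hde (b + 1)).inv hsigne)
  have hlineD : HasDerivAt (fun t : ℝ => lam + t • v) v 0 := by
    have h := ((hasDerivAt_id (0 : ℝ)).smul_const v).const_add lam
    simpa using h
  have hcomp : HasDerivAt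
      (fun t : ℝ => esymm n (b + 2) (lam + t • v) / esymm n (b + 1) (lam + t • v))
      (fderiv ℝ (fun mu : Fin n → ℝ => esymm n (b + 2) mu / esymm n (b + 1) mu) lam v) 0 := by
    have h := HasFDerivAt.comp_hasDerivAt_of_eq (hl := hQdiff.hasFDerivAt)
      (hf := hlineD) (hy := h0line.symm)
    exact h
  have hkey := hcomp.unique hquot
  rw [show b + 2 - 1 = b + 1 from rfl]
  rw [hkey]
  -- positivity of the numerator
  have hsplit2 : esymm n (b + 2) lam = e (b + 2) + lam i * e (b + 1) := by
    have := hline 0 (b + 1); rw [h0line] at this; simpa using this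
  have hsplit1 : esymm n (b + 1) lam = e (b + 1) + lam i * e b := by
    have := hline 0 b; rw [h0line] at this; simpa using this
  have hnumid : e (b + 1) * esymm n (b + 1) lam - esymm n (b + 2) lam * e b
      = e (b + 1) ^ 2 - e (b + 2) * e b := by
    rw [hsplit1, hsplit2]; ring
  have hnewton := newton_finset A lam b
  apply div_nonneg
  · rw [hnumid]
    have : e (b + 2) * e b ≤ e (b + 1) ^ 2 := hnewton
    linarith
  · positivity
end

section
/- (Lemma 2.8, first part.) Let n ≥ 2 and 1 ≤ l < k ≤ n. If λ ∈ Γ_k, then for every index i ∈ {1,…,n} one has σ_{l-1}(λ|i) > 0, σ_l(λ) > 0, and the strict inequality σ_{k-1}(λ|i)·σ_l(λ) > σ_k(λ)·σ_{l-1}(λ|i); equivalently, σ_{k-1}(λ|i)/σ_{l-1}(λ|i) > σ_k(λ)/σ_l(λ). -/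
namespace NewtonAux
open Multiset Polynomial

lemma esymm_zero' (s : Multiset ℝ) : s.esymm 0 = 1 := by
  simp [Multiset.esymm, powersetCard_zero_left]

lemma esymm_cons (a : ℝ) (s : Multiset ℝ) (m : ℕ) :
    (a ::ₘ s).esymm (m + 1) = s.esymm (m + 1) + a * s.esymm m := by
  rw [Multiset.esymm, powersetCard_cons, Multiset.map_add, Multiset.sum_add, Multiset.map_map]
  congr 1
  rw [Multiset.esymm, ← Multiset.sum_map_mul_left]
  congr 1
  exact Multiset.map_congr rfl fun t _ => by simp

lemma esymm_eq_zero (s : Multiset ℝ) (m : ℕ) (h : Multiset.card s < m) : s.esymm m = 0 := by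
  simp [Multiset.esymm, powersetCard_eq_empty _ h]

lemma esymm_card (s : Multiset ℝ) : s.esymm (Multiset.card s) = s.prod := by
  have h1 : Multiset.card (powersetCard (Multiset.card s) s) = 1 := by
    simp [card_powersetCard]
  obtain ⟨t, ht⟩ := Multiset.card_eq_one.mp h1
  have hs : s ∈ powersetCard (Multiset.card s) s := by
    simp [mem_powersetCard]
  rw [ht, Multiset.mem_singleton] at hs
  rw [Multiset.esymm, ht, ← hs]
  simp

lemma esymm_cons_zero (s : Multiset ℝ) (m : ℕ) :
    ((0 : ℝ) ::ₘ s).esymm m = s.esymm m := by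
  cases m with
  | zero => rw [esymm_zero', esymm_zero']
  | succ m => rw [esymm_cons]; ring


lemma esymm_one' (s : Multiset ℝ) : s.esymm 1 = s.sum := by
  rw [Multiset.esymm, powersetCard_one, Multiset.map_map]
  have : (Multiset.prod ∘ (fun a => ({a} : Multiset ℝ))) = id := funext fun t => by simp
  rw [this, Multiset.map_id]

lemma sq_sum_le (s : Multiset ℝ) :
    s.sum ^ 2 ≤ (Multiset.card s : ℝ) * (s.map (fun x => x ^ 2)).sum := by
  induction s using Multiset.induction with
  | empty => simp
  | cons a s ih =>
    have hQ : (0:ℝ) ≤ (s.map (fun x => x ^ 2)).sum :=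
      Multiset.sum_nonneg (by intro x hx; obtain ⟨y, _, rfl⟩ := Multiset.mem_map.mp hx; positivity)
    have hn : (0:ℝ) ≤ (Multiset.card s : ℝ) := Nat.cast_nonneg _
    simp only [Multiset.sum_cons, Multiset.map_cons, Multiset.card_cons]
    push_cast
    rcases eq_or_lt_of_le hn with h0 | h0
    · have : s.sum ^ 2 ≤ 0 := by rw [← h0] at ih; simpa using ih
      have hs0 : s.sum = 0 := by nlinarith [sq_nonneg s.sum]
      rw [hs0]
      nlinarith
    · nlinarith [sq_nonneg ((Multiset.card s : ℝ) * a - s.sum), ih, hQ]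

lemma sum_sq_identity (s : Multiset ℝ) :
    s.sum ^ 2 = (s.map (fun x => x ^ 2)).sum + 2 * s.esymm 2 := by
  induction s using Multiset.induction with
  | empty => simp [esymm_eq_zero (0 : Multiset ℝ) 2 (by simp)]
  | cons a s ih =>
    have hc : (a ::ₘ s).esymm 2 = s.esymm 2 + a * s.esymm 1 := esymm_cons a s 1
    simp only [Multiset.sum_cons, Multiset.map_cons]
    rw [hc, esymm_one']
    nlinarith [ih]

/-- Newton's inequality at level `m = 1` (base case): `n² σ₀σ₂ ≤ C(n,0)C(n,2) σ₁²`. -/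
lemma newton_base (s : Multiset ℝ) :
    ((Multiset.card s).choose 1 : ℝ)^2 * (s.esymm 0 * s.esymm 2) ≤
      ((Multiset.card s).choose 0 * (Multiset.card s).choose 2 : ℕ) * s.esymm 1 ^ 2 := by
  rcases lt_or_ge (Multiset.card s) 2 with h | h
  · rw [esymm_eq_zero s 2 h, mul_zero, mul_zero]
    positivity
  · have h2 : ((Multiset.card s).choose 2) * 2 = Multiset.card s * (Multiset.card s - 1) := by
      rw [Nat.choose_two_right]
      refine Nat.div_mul_cancel ?_
      obtain ⟨m, hm⟩ : ∃ m, Multiset.card s = m + 1 := ⟨Multiset.card s - 1, by omega⟩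
      rw [hm]
      simpa [Nat.succ_sub_one, mul_comm] using (Nat.even_mul_succ_self m).two_dvd
    have h1 : (1:ℕ) ≤ Multiset.card s := by omega
    have h2' : (((Multiset.card s).choose 2 : ℕ) : ℝ) * 2
        = (Multiset.card s : ℝ) * ((Multiset.card s : ℝ) - 1) := by
      have hc := congrArg (Nat.cast : ℕ → ℝ) h2
      push_cast [Nat.cast_sub h1] at hc
      linarith [hc]
    have hcs := sq_sum_le s
    have hid := sum_sq_identity s
    rw [← esymm_one'] at hcs hid
    rw [esymm_zero', Nat.choose_one_right, Nat.choose_zero_right]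
    have hn : (0:ℝ) ≤ (Multiset.card s : ℝ) := Nat.cast_nonneg _
    have hcs' := mul_le_mul_of_nonneg_left hcs hn
    push_cast
    set e1 := s.esymm 1
    set e2 := s.esymm 2
    set Q := (s.map (fun x => x^2)).sum
    have h3 : (((Multiset.card s).choose 2 : ℕ):ℝ) * e1^2 * 2
        = ((Multiset.card s : ℝ) * ((Multiset.card s : ℝ) - 1)) * e1^2 := by
      linear_combination e1^2 * h2'
    have hid2 : (Multiset.card s : ℝ)^2 * e1^2
        = (Multiset.card s : ℝ)^2 * Q + (Multiset.card s : ℝ)^2 * (2*e2) := by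
      linear_combination ((Multiset.card s : ℝ)^2) * hid
    nlinarith [hcs', h3, hid2]


/-- Derivative step: for a multiset of reals of size `N+1` there is a multiset of
size `N` (the roots of the derivative) whose symmetric functions are proportional. -/
lemma exists_deriv_multiset (s : Multiset ℝ) (N : ℕ) (hN : Multiset.card s = N + 1) :
    ∃ u : Multiset ℝ, Multiset.card u = N ∧
      ∀ j, j ≤ N → ((N:ℝ) + 1) * u.esymm j = ((N + 1 - j : ℕ) : ℝ) * s.esymm j := by
  set p : Polynomial ℝ := (s.map (fun r => X + C r)).prod with hp
  have hmonic : p.Monic := monic_multiset_prod_of_monic _ _ (fun r _ => monic_X_add_C r)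
  have hmap : s.map (fun r => X + C r) = (s.map Neg.neg).map (fun a => X - C a) := by
    rw [Multiset.map_map]
    exact Multiset.map_congr rfl fun r _ => by simp [sub_neg_eq_add]
  have hdeg : p.natDegree = N + 1 := by
    rw [hp, natDegree_multiset_prod_of_monic _ (fun f hf => by
      obtain ⟨r, _, rfl⟩ := Multiset.mem_map.mp hf; exact monic_X_add_C r)]
    simp [Multiset.map_map, hN, Function.comp_def]
    omega
  have hroots : p.roots = s.map Neg.neg := by
    rw [hp, hmap, roots_multiset_prod_X_sub_C]
  have hcroots : Multiset.card p.roots = N + 1 := by rw [hroots, Multiset.card_map, hN]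
  set q := derivative p with hq
  have hqd : q.natDegree ≤ N := by
    have h := natDegree_derivative_le p
    rw [← hq, hdeg] at h
    omega
  have hq1 : N + 1 ≤ Multiset.card q.roots + 1 := by
    have h := card_roots_le_derivative p
    rw [← hq, hcroots] at h
    omega
  have hq2 : Multiset.card q.roots ≤ q.natDegree := card_roots' q
  have hqroots : Multiset.card q.roots = N := by omega
  have hqdeg : q.natDegree = N := by omega
  have hlead : q.leadingCoeff = (N:ℝ) + 1 := by
    rw [Polynomial.leadingCoeff, hqdeg, hq, coeff_derivative]
    rw [show N + 1 = p.natDegree from hdeg.symm, hmonic.coeff_natDegree]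
    push_cast [hdeg]
    ring
  have hfact := C_leadingCoeff_mul_prod_multiset_X_sub_C (p := q) (by rw [hqroots, hqdeg])
  set u : Multiset ℝ := q.roots.map Neg.neg with hu
  have hcu : Multiset.card u = N := by rw [hu, Multiset.card_map, hqroots]
  have hqfact : q = C ((N:ℝ)+1) * (u.map (fun r => X + C r)).prod := by
    rw [← hfact, hlead, hu, Multiset.map_map]
    congr 1
    exact congrArg Multiset.prod (Multiset.map_congr rfl fun r _ => by
      simp [Function.comp_def, sub_eq_add_neg, map_neg])
  refine ⟨u, hcu, fun j hj => ?_⟩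
  have hco1 : q.coeff (N - j) = p.coeff ((N - j) + 1) * (((N-j):ℕ) + 1 : ℝ) := by
    rw [hq, coeff_derivative]
  have hco2 : p.coeff ((N - j) + 1) = s.esymm j := by
    have h1 : (N - j) + 1 ≤ Multiset.card s := by omega
    have := Multiset.prod_X_add_C_coeff s h1
    rw [hp, this, hN]
    congr 1
    omega
  have hco3 : q.coeff (N - j) = ((N:ℝ)+1) * u.esymm j := by
    rw [hqfact, coeff_C_mul]
    have h1 : N - j ≤ Multiset.card u := by omega
    have := Multiset.prod_X_add_C_coeff u h1
    rw [this, hcu]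
    congr 2
    omega
  rw [← hco3, hco1, hco2]
  have : (((N-j):ℕ) + 1 : ℝ) = ((N + 1 - j : ℕ) : ℝ) := by
    push_cast [Nat.cast_sub hj, Nat.cast_sub (by omega : j ≤ N + 1)]
    ring
  rw [this]
  ring


lemma esymm_inv (s : Multiset ℝ) (h0 : (0:ℝ) ∉ s) :
    ∀ j, j ≤ Multiset.card s →
      s.prod * (s.map (fun x => x⁻¹)).esymm (Multiset.card s - j) = s.esymm j := by
  induction s using Multiset.induction with
  | empty => intro j hj; simp at hj; simp [hj, esymm_zero']
  | cons a s ih =>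
    intro j hj
    have ha : a ≠ 0 := fun h => h0 (h ▸ Multiset.mem_cons_self a s)
    have h0' : (0:ℝ) ∉ s := fun h => h0 (Multiset.mem_cons_of_mem h)
    have IH := ih h0'
    rcases Nat.eq_or_lt_of_le hj with hj1 | hj2
    · -- j = card (a ::ₘ s)
      rw [← hj1, Nat.sub_self, esymm_zero', mul_one, hj1, esymm_card]
    · have hjs : j ≤ Multiset.card s := by
        rw [Multiset.card_cons] at hj2; omega
      rcases j with _ | j'
      · -- j = 0
        rw [Nat.sub_zero, esymm_zero']
        rw [Multiset.map_cons, Multiset.card_cons, ← Multiset.card_map (fun x => x⁻¹) s,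
          ← Multiset.card_cons, esymm_card]
        rw [Multiset.prod_cons, Multiset.prod_cons]
        rw [Multiset.prod_map_inv]
        have hps : s.prod ≠ 0 := Multiset.prod_ne_zero h0'
        simp only [Multiset.map_id']
        field_simp
      · -- 1 ≤ j = j'+1 ≤ card s
        have hj's : j' + 1 ≤ Multiset.card s := hjs
        have e1 : Multiset.card (a ::ₘ s) - (j' + 1)
            = (Multiset.card s - (j' + 1)) + 1 := by
          rw [Multiset.card_cons]; omega
        rw [Multiset.map_cons, e1, esymm_cons, Multiset.prod_cons]
        have e2 : Multiset.card s - (j' + 1) + 1 = Multiset.card s - j' := by omega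
        rw [e2]
        have IH1 := IH j' (by omega)
        have IH2 := IH (j' + 1) hj's
        rw [esymm_cons]
        calc a * s.prod * ((Multiset.map (fun x => x⁻¹) s).esymm (Multiset.card s - j')
              + a⁻¹ * (Multiset.map (fun x => x⁻¹) s).esymm (Multiset.card s - (j' + 1)))
            = a * (s.prod * (Multiset.map (fun x => x⁻¹) s).esymm (Multiset.card s - j'))
              + (a * a⁻¹) * (s.prod *
                (Multiset.map (fun x => x⁻¹) s).esymm (Multiset.card s - (j' + 1))) := by ring
          _ = s.esymm (j' + 1) + a * s.esymm j' := by
              rw [IH1, IH2, mul_inv_cancel₀ ha]; ring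
          _ = _ := by ring

lemma nat_bin (N j : ℕ) (hj : j ≤ N + 1) :
    (N + 1) * N.choose j = (N + 1 - j) * (N + 1).choose j := by
  rcases Nat.eq_or_lt_of_le hj with h | h
  · subst h
    simp [Nat.choose_eq_zero_of_lt]
  · have h1 : (N + 1) * N.choose j = (N + 1).choose (j + 1) * (j + 1) := by
      rw [← Nat.add_one_mul_choose_eq]
    have h2 : (N + 1).choose (j + 1) * (j + 1) = (N + 1).choose j * (N + 1 - j) :=
      Nat.choose_succ_right_eq (N+1) j
    rw [h1, h2, mul_comm]

/-- Newton's inequality for arbitrary real multisets. -/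
theorem newton : ∀ (n : ℕ) (s : Multiset ℝ) (m : ℕ), Multiset.card s = n →
    m + 2 ≤ n →
    ((Multiset.card s).choose (m+1) : ℝ)^2 * (s.esymm m * s.esymm (m+2)) ≤
      ((Multiset.card s).choose m * (Multiset.card s).choose (m+2) : ℕ) * s.esymm (m+1) ^ 2 := by
  intro n
  induction n using Nat.strong_induction_on with
  | _ n ihn =>
    intro s m hcard hm
    rcases Nat.eq_zero_or_pos m with rfl | hm1
    · exact newton_base s
    rcases Nat.eq_or_lt_of_le hm with htop | hred
    · -- top case : card s = m + 2, use inversion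
      by_cases h0 : (0:ℝ) ∈ s
      · have h2 : s.esymm (m+2) = 0 := by
          rw [show m + 2 = Multiset.card s by omega, esymm_card]
          exact Multiset.prod_eq_zero h0
        rw [h2, mul_zero, mul_zero]
        positivity
      · set x := s.map (fun y : ℝ => y⁻¹) with hx
        have hcx : Multiset.card x = m + 2 := by rw [hx, Multiset.card_map]; omega
        have hP : s.prod ≠ 0 := Multiset.prod_ne_zero h0
        have hdual := esymm_inv s h0
        have hcs : Multiset.card s = m + 2 := by omega
        have d0 : s.prod * x.esymm 2 = s.esymm m := by
          have := hdual m (by omega)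
          rwa [hcs, show m + 2 - m = 2 by omega] at this
        have d1 : s.prod * x.esymm 1 = s.esymm (m+1) := by
          have := hdual (m+1) (by omega)
          rwa [hcs, show m + 2 - (m+1) = 1 by omega] at this
        have d2 : s.prod * x.esymm 0 = s.esymm (m+2) := by
          have := hdual (m+2) (by omega)
          rwa [hcs, Nat.sub_self] at this
        have hbase := newton_base x
        rw [hcx] at hbase
        rw [hcs]
        have hsym1 : (m+2).choose (m+1) = (m+2).choose 1 := by
          rw [← Nat.choose_symm (by omega : m + 1 ≤ m + 2)]
          congr 1
          omega
        have hsym0 : (m+2).choose m = (m+2).choose 2 := by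
          rw [← Nat.choose_symm (by omega : m ≤ m + 2)]
          congr 1
          omega
        have hsym2 : (m+2).choose (m+2) = (m+2).choose 0 := by simp
        rw [hsym1, hsym0, hsym2]
        rw [← d0, ← d1, ← d2]
        push_cast
        push_cast at hbase
        nlinarith [mul_le_mul_of_nonneg_left hbase (sq_nonneg s.prod)]
    · -- reduction case : m + 2 < n
      obtain ⟨N, rfl⟩ : ∃ N, n = N + 1 := ⟨n - 1, by omega⟩
      obtain ⟨u, hcu, hrel⟩ := exists_deriv_multiset s N hcard
      have ihu := ihn N (by omega) u m hcu (by omega)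
      rw [hcu] at ihu
      rw [hcard]
      have hNne : ((N:ℝ) + 1) ≠ 0 := by positivity
      -- real versions of the esymm relations
      have r0 := hrel m (by omega)
      have r1 := hrel (m+1) (by omega)
      have r2 := hrel (m+2) (by omega)
      have hu0 : u.esymm m = ((N + 1 - m : ℕ) : ℝ) * s.esymm m / ((N:ℝ)+1) := by
        rw [eq_div_iff hNne]; linarith [r0]
      have hu1 : u.esymm (m+1) = ((N + 1 - (m+1) : ℕ) : ℝ) * s.esymm (m+1) / ((N:ℝ)+1) := by
        rw [eq_div_iff hNne]; linarith [r1]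
      have hu2 : u.esymm (m+2) = ((N + 1 - (m+2) : ℕ) : ℝ) * s.esymm (m+2) / ((N:ℝ)+1) := by
        rw [eq_div_iff hNne]; linarith [r2]
      -- binomial relations
      have b0 : ((N:ℝ) + 1) * (N.choose m : ℝ) = ((N + 1 - m : ℕ) : ℝ) * ((N+1).choose m : ℝ) := by
        exact_mod_cast congrArg (Nat.cast : ℕ → ℝ) (nat_bin N m (by omega))
      have b1 : ((N:ℝ) + 1) * (N.choose (m+1) : ℝ)
          = ((N + 1 - (m+1) : ℕ) : ℝ) * ((N+1).choose (m+1) : ℝ) := by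
        exact_mod_cast congrArg (Nat.cast : ℕ → ℝ) (nat_bin N (m+1) (by omega))
      have b2 : ((N:ℝ) + 1) * (N.choose (m+2) : ℝ)
          = ((N + 1 - (m+2) : ℕ) : ℝ) * ((N+1).choose (m+2) : ℝ) := by
        exact_mod_cast congrArg (Nat.cast : ℕ → ℝ) (nat_bin N (m+2) (by omega))
      -- positivity of the factors
      have hc0 : (0:ℝ) < ((N + 1 - m : ℕ) : ℝ) := by
        have : 0 < N + 1 - m := by omega
        exact_mod_cast Nat.cast_pos.mpr this
      have hc1 : (0:ℝ) < ((N + 1 - (m+1) : ℕ) : ℝ) := by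
        have : 0 < N + 1 - (m+1) := by omega
        exact_mod_cast Nat.cast_pos.mpr this
      have hc2 : (0:ℝ) < ((N + 1 - (m+2) : ℕ) : ℝ) := by
        have : 0 < N + 1 - (m+2) := by omega
        exact_mod_cast Nat.cast_pos.mpr this
      set c0 : ℝ := ((N + 1 - m : ℕ) : ℝ)
      set c1 : ℝ := ((N + 1 - (m+1) : ℕ) : ℝ)
      set c2 : ℝ := ((N + 1 - (m+2) : ℕ) : ℝ)
      set F : ℝ := c0 * c2 * c1^2 with hF
      have hFpos : 0 < F := by positivity
      push_cast at ihu ⊢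
      have EqL : ((N:ℝ)+1)^4 * ((N.choose (m+1) : ℝ)^2 * (u.esymm m * u.esymm (m+2)))
          = F * (((N+1).choose (m+1) : ℝ)^2 * (s.esymm m * s.esymm (m+2))) := by
        linear_combination
          ((((N:ℝ)+1) * (N.choose (m+1) : ℝ) + c1 * ((N+1).choose (m+1) : ℝ)) *
            (((N:ℝ)+1) * u.esymm m) * (((N:ℝ)+1) * u.esymm (m+2))) * b1
          + ((c1 * ((N+1).choose (m+1) : ℝ))^2 * (((N:ℝ)+1) * u.esymm (m+2))) * r0
          + ((c1 * ((N+1).choose (m+1) : ℝ))^2 * (c0 * s.esymm m)) * r2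
      have EqR : ((N:ℝ)+1)^4 * ((N.choose m : ℝ) * (N.choose (m+2) : ℝ) * u.esymm (m+1)^2)
          = F * (((N+1).choose m : ℝ) * ((N+1).choose (m+2) : ℝ) * s.esymm (m+1)^2) := by
        linear_combination
          ((((N:ℝ)+1) * (N.choose (m+2) : ℝ)) * (((N:ℝ)+1) * u.esymm (m+1))^2) * b0
          + ((c0 * ((N+1).choose m : ℝ)) * (((N:ℝ)+1) * u.esymm (m+1))^2) * b2
          + ((c0 * ((N+1).choose m : ℝ)) * (c2 * ((N+1).choose (m+2) : ℝ)) *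
              (((N:ℝ)+1) * u.esymm (m+1) + c1 * s.esymm (m+1))) * r1
      have h4 : (0:ℝ) ≤ ((N:ℝ)+1)^4 := by positivity
      have ihm := mul_le_mul_of_nonneg_left ihu h4
      have key : F * (((N+1).choose (m+1) : ℝ)^2 * (s.esymm m * s.esymm (m+2)))
          ≤ F * (((N+1).choose m : ℝ) * ((N+1).choose (m+2) : ℝ) * s.esymm (m+1)^2) := by
        rw [← EqL, ← EqR]
        linarith [ihm]
      have hfin := (mul_le_mul_iff_right₀ hFpos).mp key
      linarith [hfin]


/-- Log-concavity of binomial coefficients. -/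
lemma bin_logconcave (n m : ℕ) (h : m + 2 ≤ n) :
    n.choose m * n.choose (m+2) ≤ n.choose (m+1) ^ 2 := by
  set A := n.choose m
  set B := n.choose (m+1)
  set D := n.choose (m+2)
  have e1 : B * (m+1) = A * (n - m) := Nat.choose_succ_right_eq n m
  have e2 : D * (m+2) = B * (n - (m+1)) := Nat.choose_succ_right_eq n (m+1)
  have e2' : D * (m+2) = B * (n - m - 1) := by rw [e2]; congr 1
  have key : (A * D) * ((m+1) * (m+2) * (n-m)) = (B * B) * ((m+1) * (m+1) * (n-m-1)) := by
    calc (A * D) * ((m+1) * (m+2) * (n-m)) = (A * (n-m)) * (D * (m+2)) * (m+1) := by ring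
      _ = (B * (m+1)) * (B * (n-m-1)) * (m+1) := by rw [← e1, ← e2']
      _ = (B * B) * ((m+1) * (m+1) * (n-m-1)) := by ring
  have hle : (m+1) * (m+1) * (n-m-1) ≤ (m+1) * (m+2) * (n-m) :=
    Nat.mul_le_mul (Nat.mul_le_mul_left _ (by omega)) (by omega)
  have hK : 0 < (m+1) * (m+2) * (n-m) := by
    have : 0 < n - m := by omega
    positivity
  have : (A * D) * ((m+1) * (m+2) * (n-m)) ≤ (B * B) * ((m+1) * (m+2) * (n-m)) := by
    rw [key]
    exact Nat.mul_le_mul_left _ hle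
  have := Nat.le_of_mul_le_mul_right this hK
  nlinarith [this]

/-- Strict cross inequality of binomial coefficients. -/
lemma bin_strict (n k' l' : ℕ) (hlk : l' < k') (hk : k' + 1 ≤ n) :
    n.choose (k'+1) * n.choose l' < n.choose k' * n.choose (l'+1) := by
  have e1 : n.choose (k'+1) * (k'+1) = n.choose k' * (n - k') := Nat.choose_succ_right_eq n k'
  have e2 : n.choose (l'+1) * (l'+1) = n.choose l' * (n - l') := Nat.choose_succ_right_eq n l'
  have hCk : 0 < n.choose k' := Nat.choose_pos (by omega)
  have hCl : 0 < n.choose l' := Nat.choose_pos (by omega)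
  have hfac : (n - k') * (l'+1) < (n - l') * (k'+1) := by
    have hsplit : (n - l') * (k'+1) = (n - k') * (k'+1) + (k' - l') * (k'+1) := by
      rw [← Nat.add_mul]
      congr 1
      omega
    have h1 : (n - k') * (l'+1) ≤ (n - k') * (k'+1) := Nat.mul_le_mul_left _ (by omega)
    have h2 : 0 < (k' - l') * (k'+1) := Nat.mul_pos (by omega) (by omega)
    omega
  have key : (n.choose (k'+1) * n.choose l') * ((k'+1) * (l'+1))
      < (n.choose k' * n.choose (l'+1)) * ((k'+1) * (l'+1)) := by
    calc (n.choose (k'+1) * n.choose l') * ((k'+1) * (l'+1))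
        = (n.choose (k'+1) * (k'+1)) * n.choose l' * (l'+1) := by ring
      _ = (n.choose k' * n.choose l') * ((n - k') * (l'+1)) := by rw [e1]; ring
      _ < (n.choose k' * n.choose l') * ((n - l') * (k'+1)) := by
          exact (Nat.mul_lt_mul_left (Nat.mul_pos hCk hCl)).mpr hfac
      _ = n.choose k' * (n.choose l' * (n - l')) * (k'+1) := by ring
      _ = n.choose k' * (n.choose (l'+1) * (l'+1)) * (k'+1) := by rw [e2]
      _ = (n.choose k' * n.choose (l'+1)) * ((k'+1) * (l'+1)) := by ring
  exact Nat.lt_of_mul_lt_mul_right key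

/-- Decreasing ratio chain. -/
lemma ratio_chain (q : ℕ → ℝ) (k : ℕ) (hpos : ∀ j, j ≤ k → 0 < q j)
    (hnewt : ∀ m, m + 2 ≤ k → q (m+2) * q m ≤ q (m+1) ^ 2) :
    ∀ l' d, l' + d + 1 ≤ k → q (l'+d+1) * q l' ≤ q (l'+d) * q (l'+1) := by
  intro l' d
  induction d with
  | zero => intro _; exact le_of_eq (mul_comm _ _)
  | succ d ihd =>
    intro h
    have hd := ihd (by omega)
    have hn := hnewt (l'+d) (by omega)
    have p0 : 0 < q l' := hpos l' (by omega)
    have p1 : 0 < q (l'+1) := hpos (l'+1) (by omega)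
    have pd : 0 < q (l'+d) := hpos (l'+d) (by omega)
    have pd1 : 0 < q (l'+d+1) := hpos (l'+d+1) (by omega)
    have h1 : q (l'+d+2) * q l' * q (l'+d) ≤ q (l'+d+1) * q (l'+1) * q (l'+d) := by
      nlinarith [mul_le_mul_of_nonneg_right hn p0.le,
        mul_le_mul_of_nonneg_left hd pd1.le]
    have := le_of_mul_le_mul_right h1 pd
    exact this

/-- Lemma A : positivity of the deleted symmetric functions. -/
lemma lemA : ∀ (m : ℕ) (t : Multiset ℝ) (x : ℝ),
    (∀ j, 1 ≤ j → j ≤ m + 1 → 0 < (x ::ₘ t).esymm j) → m ≤ Multiset.card t →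
    0 < t.esymm m := by
  intro m
  induction m using Nat.strong_induction_on with
  | _ m ihm =>
    intro t x hpos hcard
    rcases Nat.eq_zero_or_pos m with rfl | hm1
    · rw [esymm_zero']; norm_num
    obtain ⟨m', rfl⟩ : ∃ m', m = m' + 1 := ⟨m - 1, by omega⟩
    have ha : 0 < t.esymm m' :=
      ihm m' (by omega) t x (fun j h1 h2 => hpos j h1 (by omega)) (by omega)
    have h1 : 0 < t.esymm (m'+1) + x * t.esymm m' := by
      have := hpos (m'+1) (by omega) (by omega)
      rwa [esymm_cons] at this
    rcases le_or_gt x 0 with hx | hx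
    · nlinarith [h1, ha]
    · have h2 : 0 < t.esymm (m'+2) + x * t.esymm (m'+1) := by
        have := hpos (m'+2) (by omega) (by omega)
        rwa [esymm_cons] at this
      rcases Nat.eq_or_lt_of_le hcard with hc | hc
      · -- card t = m'+1
        have hz : t.esymm (m'+2) = 0 := esymm_eq_zero t (m'+2) (by omega)
        rw [hz, zero_add] at h2
        nlinarith [h2, hx]
      · -- m' + 2 ≤ card t
        by_contra hb
        push_neg at hb
        have hN := newton (Multiset.card t) t m' rfl (by omega)
        have hCpos : 0 < ((Multiset.card t).choose (m'+1) : ℝ) := by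
          exact_mod_cast Nat.choose_pos (by omega : m' + 1 ≤ Multiset.card t)
        have hlog : ((Multiset.card t).choose m' : ℝ) * ((Multiset.card t).choose (m'+2) : ℝ)
            ≤ ((Multiset.card t).choose (m'+1) : ℝ)^2 := by
          exact_mod_cast bin_logconcave (Multiset.card t) m' (by omega)
        push_cast at hN
        rcases eq_or_lt_of_le hb with hb0 | hbneg
        · -- b = 0
          have hc0 : 0 < t.esymm (m'+2) := by
            rw [hb0, mul_zero, add_zero] at h2
            exact h2
          rw [hb0] at hN
          simp only [ne_eq, OfNat.ofNat_ne_zero, not_false_eq_true, zero_pow, mul_zero] at hN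
          have : 0 < ((Multiset.card t).choose (m'+1) : ℝ)^2 * (t.esymm m' * t.esymm (m'+2)) :=
            mul_pos (pow_pos hCpos 2) (mul_pos ha hc0)
          linarith
        · -- b < 0
          have hnb : 0 < -t.esymm (m'+1) := by linarith
          have s1 : -t.esymm (m'+1) < x * t.esymm m' := by linarith [h1]
          have s2 : x * (-t.esymm (m'+1)) < t.esymm (m'+2) := by linarith [h2]
          have hp : (-t.esymm (m'+1)) * (x * (-t.esymm (m'+1)))
              < (x * t.esymm m') * t.esymm (m'+2) :=
            mul_lt_mul'' s1 s2 hnb.le (mul_pos hx hnb).le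
          have hac : t.esymm (m'+1)^2 < t.esymm m' * t.esymm (m'+2) := by
            nlinarith [hp, hx]
          have k1 : ((Multiset.card t).choose (m'+1) : ℝ)^2 * (t.esymm (m'+1)^2)
              < ((Multiset.card t).choose (m'+1) : ℝ)^2 * (t.esymm m' * t.esymm (m'+2)) :=
            mul_lt_mul_of_pos_left hac (pow_pos hCpos 2)
          have k2 : ((Multiset.card t).choose m' : ℝ) * ((Multiset.card t).choose (m'+2) : ℝ)
              * t.esymm (m'+1)^2 ≤ ((Multiset.card t).choose (m'+1) : ℝ)^2 * t.esymm (m'+1)^2 :=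
            mul_le_mul_of_nonneg_right hlog (sq_nonneg _)
          linarith


/-- Main multiset-level inequality. -/
theorem main_ms (t : Multiset ℝ) (x : ℝ) (k' l' : ℕ) (hlk : l' < k')
    (hk : k' ≤ Multiset.card t)
    (hpos : ∀ j, 1 ≤ j → j ≤ k' + 1 → 0 < (x ::ₘ t).esymm j) :
    0 < t.esymm l' ∧
      (x ::ₘ t).esymm (k'+1) * t.esymm l' < t.esymm k' * (x ::ₘ t).esymm (l'+1) := by
  have hA : ∀ m, m ≤ k' → 0 < t.esymm m := fun m hm =>
    lemA m t x (fun j h1 h2 => hpos j h1 (by omega)) (by omega)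
  have hl0 : 0 < t.esymm l' := hA l' (by omega)
  refine ⟨hl0, ?_⟩
  have hck : (x ::ₘ t).esymm (k'+1) = t.esymm (k'+1) + x * t.esymm k' := esymm_cons x t k'
  have hcl : (x ::ₘ t).esymm (l'+1) = t.esymm (l'+1) + x * t.esymm l' := esymm_cons x t l'
  have hkey : t.esymm (k'+1) * t.esymm l' < t.esymm k' * t.esymm (l'+1) := by
    have hk0 : 0 < t.esymm k' := hA k' le_rfl
    have hl1 : 0 < t.esymm (l'+1) := hA (l'+1) (by omega)
    rcases le_or_gt (t.esymm (k'+1)) 0 with hk1 | hk1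
    · have h1 := mul_pos hk0 hl1
      have h2 := mul_nonpos_of_nonpos_of_nonneg hk1 hl0.le
      linarith
    · have hkc : k' + 1 ≤ Multiset.card t := by
        by_contra h
        rw [esymm_eq_zero t (k'+1) (by omega)] at hk1
        exact lt_irrefl 0 hk1
      set N := Multiset.card t with hN
      set q : ℕ → ℝ := fun j => t.esymm j / (N.choose j : ℝ) with hq
      have hCpos : ∀ j, j ≤ N → (0:ℝ) < (N.choose j : ℝ) := fun j hj => by
        exact_mod_cast Nat.choose_pos hj
      have hqpos : ∀ j, j ≤ k' + 1 → 0 < q j := by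
        intro j hj
        have hje : 0 < t.esymm j := by
          rcases Nat.eq_or_lt_of_le hj with h | h
          · rw [h]; exact hk1
          · exact hA j (by omega)
        exact div_pos hje (hCpos j (by omega))
      have hqnewt : ∀ m, m + 2 ≤ k' + 1 → q (m+2) * q m ≤ q (m+1) ^ 2 := by
        intro m hm
        have hNn := newton N t m rfl (by omega)
        push_cast at hNn
        rw [hq]
        simp only
        rw [div_mul_div_comm, div_pow, div_le_div_iff₀
          (mul_pos (hCpos (m+2) (by omega)) (hCpos m (by omega)))
          (pow_pos (hCpos (m+1) (by omega)) 2)]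
        nlinarith [hNn]
      have chain := ratio_chain q (k'+1) hqpos hqnewt l' (k' - l') (by omega)
      have e : l' + (k' - l') = k' := by omega
      rw [e] at chain
      -- chain : q (k'+1) * q l' ≤ q k' * q (l'+1)
      rw [hq] at chain
      simp only at chain
      rw [div_mul_div_comm, div_mul_div_comm, div_le_div_iff₀
        (mul_pos (hCpos (k'+1) (by omega)) (hCpos l' (by omega)))
        (mul_pos (hCpos k' (by omega)) (hCpos (l'+1) (by omega)))] at chain
      -- chain : e(k'+1)*e(l') * (C k' * C (l'+1)) ≤ e k' * e (l'+1) * (C (k'+1) * C l')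
      have hbin : ((N.choose (k'+1) : ℝ) * (N.choose l' : ℝ))
          < (N.choose k' : ℝ) * (N.choose (l'+1) : ℝ) := by
        exact_mod_cast bin_strict N k' l' hlk hkc
      have hstrict : t.esymm k' * t.esymm (l'+1) * ((N.choose (k'+1) : ℝ) * (N.choose l' : ℝ))
          < t.esymm k' * t.esymm (l'+1) * ((N.choose k' : ℝ) * (N.choose (l'+1) : ℝ)) :=
        mul_lt_mul_of_pos_left hbin (mul_pos hk0 hl1)
      have hfin : t.esymm (k'+1) * t.esymm l' * ((N.choose k' : ℝ) * (N.choose (l'+1) : ℝ))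
          < t.esymm k' * t.esymm (l'+1) * ((N.choose k' : ℝ) * (N.choose (l'+1) : ℝ)) :=
        lt_of_le_of_lt chain hstrict
      exact lt_of_mul_lt_mul_right hfin
        (mul_pos (hCpos k' (by omega)) (hCpos (l'+1) (by omega))).le
  rw [hck, hcl]
  nlinarith [hkey]


lemma esymm_eq_ms (n m : ℕ) (lam : Fin n → ℝ) :
    esymm n m lam = (Finset.univ.val.map lam).esymm m :=
  (Finset.esymm_map_val lam Finset.univ m).symm

lemma decomp_ms (n : ℕ) (lam : Fin n → ℝ) (i : Fin n) :
    Finset.univ.val.map lam = lam i ::ₘ (Finset.univ.val.erase i).map lam := by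
  have h := Multiset.cons_erase (show i ∈ (Finset.univ : Finset (Fin n)).val by simp)
  conv_lhs => rw [← h]
  rw [Multiset.map_cons]

lemma decomp_ms_update (n : ℕ) (lam : Fin n → ℝ) (i : Fin n) :
    Finset.univ.val.map (Function.update lam i 0) =
      (0:ℝ) ::ₘ (Finset.univ.val.erase i).map lam := by
  have h := Multiset.cons_erase (show i ∈ (Finset.univ : Finset (Fin n)).val by simp)
  conv_lhs => rw [← h]
  rw [Multiset.map_cons, Function.update_self]
  congr 1
  refine Multiset.map_congr rfl fun j hj => ?_
  have hnd : (Finset.univ : Finset (Fin n)).val.Nodup := Finset.univ.nodup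
  have hji : j ≠ i := ((Multiset.Nodup.mem_erase_iff hnd).mp hj).1
  exact Function.update_of_ne hji 0 lam

end NewtonAux

open NewtonAux in
/-- Lemma 2.8, first part: for `1 ≤ l < k ≤ n` and `λ ∈ Γ_k`, for every index `i`
one has `σ_{l-1}(λ|i) > 0`, `σ_l(λ) > 0`, the strict inequality
`σ_{k-1}(λ|i) σ_l(λ) > σ_k(λ) σ_{l-1}(λ|i)`, and equivalently
`σ_{k-1}(λ|i)/σ_{l-1}(λ|i) > σ_k(λ)/σ_l(λ)`. -/
theorem deleted_quotient_strict (n k l : ℕ) (hn : 2 ≤ n) (hl1 : 1 ≤ l) (hlk : l < k)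
    (hkn : k ≤ n) (lam : Fin n → ℝ) (hlam : lam ∈ GammaCone n k) (i : Fin n) :
    0 < esymm n (l - 1) (Function.update lam i 0) ∧
    0 < esymm n l lam ∧
    esymm n (k - 1) (Function.update lam i 0) * esymm n l lam
      > esymm n k lam * esymm n (l - 1) (Function.update lam i 0) ∧
    esymm n (k - 1) (Function.update lam i 0) / esymm n (l - 1) (Function.update lam i 0)
      > esymm n k lam / esymm n l lam := by
  obtain ⟨l', rfl⟩ : ∃ l', l = l' + 1 := ⟨l - 1, by omega⟩
  obtain ⟨k', rfl⟩ : ∃ k', k = k' + 1 := ⟨k - 1, by omega⟩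
  set t : Multiset ℝ := (Finset.univ.val.erase i).map lam with ht
  set x : ℝ := lam i with hx
  have hdec : Finset.univ.val.map lam = x ::ₘ t := decomp_ms n lam i
  have hdecu : Finset.univ.val.map (Function.update lam i 0) = (0:ℝ) ::ₘ t :=
    decomp_ms_update n lam i
  have hct : Multiset.card t = n - 1 := by
    rw [ht, Multiset.card_map, Multiset.card_erase_of_mem (by simp)]
    congr 1
    simp
  have hE : ∀ m, esymm n m lam = (x ::ₘ t).esymm m := fun m => by
    rw [esymm_eq_ms, hdec]
  have hEu : ∀ m, esymm n m (Function.update lam i 0) = t.esymm m := fun m => by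
    rw [esymm_eq_ms, hdecu, esymm_cons_zero]
  have hpos : ∀ j, 1 ≤ j → j ≤ k' + 1 → 0 < (x ::ₘ t).esymm j := fun j h1 h2 => by
    rw [← hE j]; exact hlam j h1 h2
  have hk't : k' ≤ Multiset.card t := by omega
  obtain ⟨P1, P3⟩ := main_ms t x k' l' (by omega) hk't hpos
  have hl1' : 0 < esymm n (l' + 1) lam := hlam (l' + 1) (by omega) (by omega)
  have e1 : l' + 1 - 1 = l' := by omega
  have e2 : k' + 1 - 1 = k' := by omega
  rw [e1, e2, hEu l', hEu k', hE (l'+1), hE (k'+1)]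
  have hl1'' : 0 < (x ::ₘ t).esymm (l'+1) := by rw [← hE]; exact hl1'
  refine ⟨P1, hl1'', P3, ?_⟩
  rw [gt_iff_lt, div_lt_div_iff₀ hl1'' P1]
  exact P3
end

section
/- (Lemma 2.8, second part.) Let n ≥ 2 and 2 ≤ k ≤ n. If λ ∈ Γ_{k-1}, then for every index i ∈ {1,…,n} one has σ_{k-2}(λ|i) > 0 and σ_{k-1}(λ|i)·σ_{k-1}(λ) ≥ σ_k(λ)·σ_{k-2}(λ|i); equivalently, σ_{k-1}(λ|i)/σ_{k-2}(λ|i) ≥ σ_k(λ)/σ_{k-1}(λ). -/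
open Polynomial

namespace MyEsymm

lemma esymm_cons (a : ℝ) (s : Multiset ℝ) (k : ℕ) :
    (a ::ₘ s).esymm (k + 1) = s.esymm (k + 1) + a * s.esymm k := by
  simp only [Multiset.esymm, Multiset.powersetCard_cons, Multiset.map_add, Multiset.sum_add,
    Multiset.map_map, Function.comp_def, Multiset.prod_cons]
  rw [Multiset.sum_map_mul_left]

lemma esymm_zero' (s : Multiset ℝ) : s.esymm 0 = 1 := by
  simp [Multiset.esymm, Multiset.powersetCard_zero_left]

lemma esymm_of_card_lt {s : Multiset ℝ} {k : ℕ} (h : Multiset.card s < k) :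
    s.esymm k = 0 := by
  simp [Multiset.esymm, Multiset.powersetCard_eq_empty _ h]

lemma powersetCard_card (s : Multiset ℝ) : s.powersetCard (Multiset.card s) = {s} := by
  induction s using Multiset.induction_on with
  | empty => rfl
  | cons a t ih =>
      simp [Multiset.powersetCard_cons, ih, Multiset.powersetCard_eq_empty _ (Nat.lt_succ_self _)]

lemma esymm_card (s : Multiset ℝ) : s.esymm (Multiset.card s) = s.prod := by
  simp [Multiset.esymm, powersetCard_card]

lemma esymm_one' (s : Multiset ℝ) : s.esymm 1 = s.sum := by
  simp [Multiset.esymm, Multiset.powersetCard_one, Multiset.map_map]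

lemma esymm_smul (c : ℝ) (s : Multiset ℝ) (k : ℕ) :
    (s.map (fun x => c * x)).esymm k = c ^ k * s.esymm k := by
  rw [Multiset.esymm, Multiset.powersetCard_map, Multiset.map_map, Multiset.esymm,
    ← Multiset.sum_map_mul_left]
  refine congrArg _ (Multiset.map_congr rfl fun t ht => ?_)
  have hc : Multiset.card t = k := (Multiset.mem_powersetCard.mp ht).2
  simp only [Function.comp_apply]
  rw [show (fun x => c * x) = (fun x => (fun _ : ℝ => c) x * id x) from rfl,
    Multiset.prod_map_mul]
  simp [Multiset.map_const', hc]

/-- Cauchy–Schwarz for multisets. -/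
lemma sq_sum_le (s : Multiset ℝ) :
    s.sum ^ 2 ≤ (Multiset.card s : ℝ) * (s.map (fun x => x ^ 2)).sum := by
  induction s using Multiset.induction_on with
  | empty => simp
  | cons a t ih =>
      simp only [Multiset.sum_cons, Multiset.map_cons, Multiset.card_cons]
      push_cast
      have h1 : (0:ℝ) ≤ (Multiset.card t : ℝ) := Nat.cast_nonneg _
      rcases Nat.eq_zero_or_pos (Multiset.card t) with h0 | hpos
      · have : t = 0 := Multiset.card_eq_zero.mp h0
        subst this; simp
      · have h2 : (1:ℝ) ≤ (Multiset.card t : ℝ) := by exact_mod_cast hpos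
        nlinarith [sq_nonneg (t.sum - (Multiset.card t : ℝ) * a), sq_nonneg t.sum]

/-- `(∑ s)² = ∑ s² + 2 σ₂(s)`. -/
lemma sq_sum_eq (s : Multiset ℝ) :
    s.sum ^ 2 = (s.map (fun x => x ^ 2)).sum + 2 * s.esymm 2 := by
  induction s using Multiset.induction_on with
  | empty => simp [esymm_of_card_lt (show Multiset.card (0 : Multiset ℝ) < 2 by simp)]
  | cons a t ih =>
      have h2 : (a ::ₘ t).esymm 2 = t.esymm 2 + a * t.esymm 1 := esymm_cons a t 1
      simp only [Multiset.sum_cons, Multiset.map_cons, h2, esymm_one']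
      nlinarith [ih]

noncomputable def P (s : Multiset ℝ) : ℝ[X] := (s.map fun r => X + C r).prod

lemma P_monic (s : Multiset ℝ) : (P s).Monic := by
  exact monic_multiset_prod_of_monic s _ fun r _ => monic_X_add_C r

lemma P_natDegree (s : Multiset ℝ) : (P s).natDegree = Multiset.card s := by
  rw [P, natDegree_multiset_prod_of_monic]
  · simp [Multiset.map_map, Function.comp_def]
  · intro f hf
    obtain ⟨r, _, rfl⟩ := Multiset.mem_map.mp hf
    exact monic_X_add_C r

lemma P_coeff (s : Multiset ℝ) {j : ℕ} (hj : j ≤ Multiset.card s) :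
    (P s).coeff (Multiset.card s - j) = s.esymm j := by
  rw [P, Multiset.prod_X_add_C_coeff s (Nat.sub_le _ _), Nat.sub_sub_self hj]

lemma P_roots (s : Multiset ℝ) : (P s).roots = s.map (fun a => -a) := by
  have : P s = ((s.map fun a => -a).map fun a => X - C a).prod := by
    rw [Multiset.map_map]
    refine congrArg _ (Multiset.map_congr rfl fun a _ => ?_)
    simp [sub_neg_eq_add]
  rw [this, roots_multiset_prod_X_sub_C]

/-- Key step: differentiating kills one root but rescales esymm's. -/
lemma derivative_esymm (s : Multiset ℝ) (hs : 1 ≤ Multiset.card s) :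
    ∃ t : Multiset ℝ, Multiset.card t = Multiset.card s - 1 ∧
      ∀ j ≤ Multiset.card s - 1,
        ((Multiset.card s - j : ℕ) : ℝ) * s.esymm j = (Multiset.card s : ℝ) * t.esymm j := by
  set n := Multiset.card s with hn
  set q := derivative (P s) with hq
  have hqd : q.natDegree ≤ n - 1 := by
    have h := natDegree_derivative_le (P s); rw [P_natDegree] at h; exact h
  have hql : q.coeff (n - 1) = (n : ℝ) := by
    rw [hq, coeff_derivative]
    have h1 : n - 1 + 1 = n := Nat.succ_pred_eq_of_pos hs
    rw [h1]
    have : (P s).coeff n = 1 := by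
      have := (P_monic s).coeff_natDegree
      rwa [P_natDegree] at this
    rw [this]
    norm_cast
    omega
  have hn0 : (n : ℝ) ≠ 0 := Nat.cast_ne_zero.mpr (by omega)
  have hq0 : q ≠ 0 := fun h => hn0 (by simpa [h] using hql.symm)
  have hqdeg : q.natDegree = n - 1 :=
    le_antisymm hqd (le_natDegree_of_ne_zero (by rw [hql]; exact hn0))
  have hql' : q.leadingCoeff = (n : ℝ) := by rwa [leadingCoeff, hqdeg]
  have hroots : Multiset.card q.roots = n - 1 := by
    have h1 : Multiset.card (P s).roots = n := by rw [P_roots, Multiset.card_map, hn]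
    have h2 := Polynomial.card_roots_le_derivative (P s)
    have h3 := Polynomial.card_roots' q
    rw [h1, ← hq] at h2
    omega
  have hsplit : Splits q := splits_iff_card_roots.mpr (hroots.trans hqdeg.symm)
  have hfact : q = C ((n : ℝ)) * (q.roots.map fun a => X - C a).prod := by
    conv_lhs => rw [hsplit.eq_prod_roots, hql']
  refine ⟨q.roots.map fun a => -a, by rw [Multiset.card_map, hroots], fun j hj => ?_⟩
  set t := q.roots.map fun a => -a with ht
  have htP : q = C ((n : ℝ)) * P t := by
    rw [hfact, P, ht, Multiset.map_map]
    congr 1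
    refine congrArg _ (Multiset.map_congr rfl fun a _ => ?_)
    simp [sub_eq_add_neg]
  have hct : Multiset.card t = n - 1 := by rw [ht, Multiset.card_map, hroots]
  -- coefficient at n - 1 - j
  have e1 : q.coeff (n - 1 - j) = (n : ℝ) * t.esymm j := by
    rw [htP, coeff_C_mul]
    have : n - 1 - j = Multiset.card t - j := by rw [hct]
    rw [this, P_coeff t (by omega)]
  have e2 : q.coeff (n - 1 - j) = (P s).coeff (n - j) * ((n - j : ℕ) : ℝ) := by
    rw [hq, coeff_derivative]
    have h1 : n - 1 - j + 1 = n - j := by omega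
    rw [h1]
    congr 1
    norm_cast
  rw [← P_coeff s (show j ≤ n by omega)] at *
  have h2 : n - (n - j) = j := by omega
  rw [h2] at *
  rw [← e1, e2]
  ring


/-- Reflection: for a multiset without zero entries,
`σ_j(s) = (∏ s) ⬝ σ_{n-j}(s⁻¹)`. -/
lemma esymm_reflect : ∀ (s : Multiset ℝ), (0 : ℝ) ∉ s → ∀ j ≤ Multiset.card s,
    s.esymm j = s.prod * (s.map (·⁻¹)).esymm (Multiset.card s - j) := by
  intro s
  induction s using Multiset.induction_on with
  | empty =>
      intro _ j hj
      have : j = 0 := by simpa using hj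
      subst this
      simp [esymm_zero']
  | cons a t ih =>
      intro h0 j hj
      have ha : a ≠ 0 := fun h => h0 (h ▸ Multiset.mem_cons_self a t)
      have h0t : (0:ℝ) ∉ t := fun h => h0 (Multiset.mem_cons_of_mem h)
      have hpt : t.prod ≠ 0 := fun h => h0t (Multiset.prod_eq_zero_iff.mp h)
      set c := Multiset.card t with hc
      have hcs : Multiset.card (a ::ₘ t) = c + 1 := by simp [hc]
      have hmap : (a ::ₘ t).map (·⁻¹) = a⁻¹ ::ₘ t.map (·⁻¹) := by simp
      have hcy : Multiset.card (t.map (·⁻¹)) = c := by simp [hc]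
      have key0 : t.prod * (t.map (·⁻¹)).esymm c = 1 := by
        have := ih h0t 0 (Nat.zero_le _)
        rw [esymm_zero'] at this
        simpa [hc] using this.symm
      rcases Nat.eq_zero_or_pos j with rfl | hj1
      · -- j = 0
        rw [esymm_zero', hcs, hmap, Nat.sub_zero, esymm_cons,
          esymm_of_card_lt (show Multiset.card (t.map (·⁻¹)) < c + 1 by omega),
          Multiset.prod_cons, zero_add]
        have : a * t.prod * (a⁻¹ * (t.map (·⁻¹)).esymm c) = t.prod * (t.map (·⁻¹)).esymm c := by
          field_simp
        rw [this, key0]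
      obtain ⟨j', rfl⟩ : ∃ j', j = j' + 1 := ⟨j - 1, by omega⟩
      rw [hcs] at hj
      rcases Nat.lt_or_ge c (j' + 1) with hjc | hjc
      · -- j = c + 1 (full)
        have hjc' : j' = c := by omega
        subst hjc'
        rw [hcs, Nat.sub_self, esymm_zero', esymm_cons,
          esymm_of_card_lt (show Multiset.card t < c + 1 by omega), Multiset.prod_cons]
        have keyc : t.esymm c = t.prod := by
          have := ih h0t c le_rfl
          simpa [esymm_zero'] using this
        rw [keyc]; ring
      · -- 1 ≤ j ≤ c
        have e1 := ih h0t (j' + 1) hjc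
        have e2 := ih h0t j' (by omega)
        rw [esymm_cons, hcs, hmap]
        have hsub : c + 1 - (j' + 1) = (c - (j' + 1)) + 1 := by omega
        rw [hsub, esymm_cons, Multiset.prod_cons, e1, e2]
        have h1 : c - (j' + 1) + 1 = c - j' := by omega
        rw [h1]
        field_simp
        ring


lemma choose_deriv_id (n j : ℕ) (hn : 1 ≤ n) :
    n * (n - 1).choose j = n.choose j * (n - j) := by
  have h1 := Nat.add_one_mul_choose_eq (n - 1) j
  have h2 := Nat.choose_succ_right_eq n j
  have h3 : n - 1 + 1 = n := by omega
  simp only [Nat.succ_eq_add_one, h3] at h1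
  exact h1.trans h2

/-- Newton's inequality (with MacLaurin weights) for real multisets. -/
lemma newton : ∀ (n : ℕ) (s : Multiset ℝ), Multiset.card s = n → ∀ k : ℕ, 1 ≤ k → k + 1 ≤ n →
    s.esymm (k + 1) * s.esymm (k - 1) * ((n.choose k : ℕ) : ℝ) ^ 2 ≤
      (s.esymm k) ^ 2 * ((n.choose (k + 1) : ℝ) * (n.choose (k - 1) : ℝ)) := by
  intro n
  induction n with
  | zero => intro s _ k _ h; omega
  | succ n ih =>
    intro s hs k hk1 hk2
    rcases Nat.lt_or_ge (k + 1) (n + 1) with hlt | hge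
    · -- inductive step via differentiation
      obtain ⟨t, hct, hrel⟩ := derivative_esymm s (by omega)
      rw [hs] at hct hrel
      simp only [Nat.add_sub_cancel] at hct hrel
      have R : ∀ j ≤ n, ((n.choose j : ℕ) : ℝ) * s.esymm j
          = (((n + 1).choose j : ℕ) : ℝ) * t.esymm j := by
        intro j hj
        have h1 := hrel j (by omega)
        have h2 : (n + 1) * n.choose j = (n + 1).choose j * (n + 1 - j) :=
          choose_deriv_id (n + 1) j (by omega)
        have hc2 : ((n:ℝ) + 1) * (n.choose j : ℕ) = ((n + 1).choose j : ℕ) * ((n:ℝ) + 1 - j) := by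
          have := congrArg (fun m : ℕ => (m : ℝ)) h2
          push_cast [Nat.cast_sub (by omega : j ≤ n + 1)] at this
          linarith [this]
        have h1' : ((n:ℝ) + 1 - j) * s.esymm j = ((n:ℝ) + 1) * t.esymm j := by
          have := h1
          push_cast [Nat.cast_sub (by omega : j ≤ n + 1)] at this
          linarith [this]
        have hne : ((n:ℝ) + 1) ≠ 0 := by positivity
        apply mul_left_cancel₀ hne
        calc ((n:ℝ) + 1) * (((n.choose j : ℕ) : ℝ) * s.esymm j)
            = (((n + 1).choose j : ℕ) : ℝ) * (((n:ℝ) + 1 - j) * s.esymm j) := by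
              rw [← mul_assoc, hc2]; ring
          _ = (((n + 1).choose j : ℕ) : ℝ) * (((n:ℝ) + 1) * t.esymm j) := by rw [h1']
          _ = ((n:ℝ) + 1) * ((((n + 1).choose j : ℕ) : ℝ) * t.esymm j) := by ring
      have IH := ih t hct k hk1 (by omega)
      set a0 := ((n.choose (k - 1) : ℕ) : ℝ) with ha0
      set a1 := ((n.choose k : ℕ) : ℝ) with ha1
      set a2 := ((n.choose (k + 1) : ℕ) : ℝ) with ha2
      set b0 := (((n + 1).choose (k - 1) : ℕ) : ℝ) with hb0
      set b1 := (((n + 1).choose k : ℕ) : ℝ) with hb1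
      set b2 := (((n + 1).choose (k + 1) : ℕ) : ℝ) with hb2
      set x0 := t.esymm (k - 1) with hx0
      set x1 := t.esymm k with hx1
      set x2 := t.esymm (k + 1) with hx2
      set y0 := s.esymm (k - 1) with hy0
      set y1 := s.esymm k with hy1
      set y2 := s.esymm (k + 1) with hy2
      have r0 : a0 * y0 = b0 * x0 := R (k - 1) (by omega)
      have r1 : a1 * y1 = b1 * x1 := R k (by omega)
      have r2 : a2 * y2 = b2 * x2 := R (k + 1) (by omega)
      have ha0p : 0 < a0 := by
        rw [ha0]; exact_mod_cast Nat.choose_pos (by omega : k - 1 ≤ n)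
      have ha1p : 0 < a1 := by
        rw [ha1]; exact_mod_cast Nat.choose_pos (by omega : k ≤ n)
      have ha2p : 0 < a2 := by
        rw [ha2]; exact_mod_cast Nat.choose_pos (by omega : k + 1 ≤ n)
      have hb0p : (0:ℝ) ≤ b0 := by rw [hb0]; positivity
      have hb1p : (0:ℝ) ≤ b1 := by rw [hb1]; positivity
      have hb2p : (0:ℝ) ≤ b2 := by rw [hb2]; positivity
      have hM : 0 < a2 * a0 * a1 ^ 2 := by positivity
      have key1 : (y2 * y0 * b1 ^ 2) * (a2 * a0 * a1 ^ 2)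
          = (x2 * x0 * a1 ^ 2) * (b2 * b0 * b1 ^ 2) := by
        linear_combination (a1 ^ 2 * b1 ^ 2 * a0 * y0) * r2 + (a1 ^ 2 * b1 ^ 2 * b2 * x2) * r0
      have key2 : (y1 ^ 2 * (b2 * b0)) * (a2 * a0 * a1 ^ 2)
          = (x1 ^ 2 * (a2 * a0)) * (b2 * b0 * b1 ^ 2) := by
        linear_combination (a2 * a0 * b2 * b0 * (a1 * y1 + b1 * x1)) * r1
      have hBp : (0:ℝ) ≤ b2 * b0 * b1 ^ 2 := by positivity
      have step : (y2 * y0 * b1 ^ 2) * (a2 * a0 * a1 ^ 2)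
          ≤ (y1 ^ 2 * (b2 * b0)) * (a2 * a0 * a1 ^ 2) := by
        rw [key1, key2]
        exact mul_le_mul_of_nonneg_right IH hBp
      exact le_of_mul_le_mul_right step hM
    · -- base case : k = n
      have hkn : k = n := by omega
      subst hkn
      have hcs : Multiset.card s = k + 1 := hs
      rw [Nat.choose_succ_self_right, Nat.choose_self]
      have hsym : (k + 1).choose (k - 1) = (k + 1).choose 2 := by
        have h2 : k + 1 - 2 = k - 1 := by omega
        rw [← h2, Nat.choose_symm (by omega)]
      rw [hsym]
      have hC2 : ((k + 1).choose 2 : ℝ) * 2 = ((k:ℝ) + 1) * k := by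
        have := Nat.choose_succ_right_eq (k + 1) 1
        rw [Nat.choose_one_right] at this
        have h3 : k + 1 - 1 = k := by omega
        rw [h3] at this
        exact_mod_cast congrArg (fun m : ℕ => (m : ℝ)) this
      by_cases h0 : (0:ℝ) ∈ s
      · have hprod : s.prod = 0 := Multiset.prod_eq_zero h0
        have htop : s.esymm (k + 1) = 0 := by
          rw [← hcs, esymm_card, hprod]
        rw [htop]
        have hrhs : (0:ℝ) ≤ (s.esymm k) ^ 2 * ((1:ℝ) * (((k + 1).choose 2 : ℕ) : ℝ)) := by
          positivity
        nlinarith [hrhs]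
      · set y := s.map (·⁻¹) with hy
        have hcy : Multiset.card y = k + 1 := by rw [hy, Multiset.card_map, hcs]
        have e2 := esymm_reflect s h0 (k + 1) (by omega)
        have e1 := esymm_reflect s h0 k (by omega)
        have e0 := esymm_reflect s h0 (k - 1) (by omega)
        rw [hcs] at e2 e1 e0
        have h21 : k + 1 - (k + 1) = 0 := by omega
        have h11 : k + 1 - k = 1 := by omega
        have h01 : k + 1 - (k - 1) = 2 := by omega
        rw [h21, esymm_zero', mul_one] at e2
        rw [h11, esymm_one'] at e1
        rw [h01] at e0
        set Pd := s.prod with hPd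
        set Q := (y.map (fun x => x ^ 2)).sum with hQ
        set Sg := y.sum with hSg
        have hid : Sg ^ 2 = Q + 2 * y.esymm 2 := sq_sum_eq y
        have hcs2 : Sg ^ 2 ≤ ((k:ℝ) + 1) * Q := by
          have h := sq_sum_le y
          rw [hcy, ← hSg, ← hQ] at h
          push_cast at h
          exact h
        set E2 := y.esymm 2 with hE2
        have hid2 : 2 * E2 = Sg ^ 2 - Q := by linarith [hid]
        have h5 : 0 ≤ Pd ^ 2 * ((k:ℝ) + 1) * (((k:ℝ) + 1) * Q - Sg ^ 2) := by
          have := sub_nonneg.mpr hcs2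
          positivity
        rw [e2, e1, e0]
        push_cast
        have heq : 2 * ((Pd * Sg) ^ 2 * ((1:ℝ) * (((k + 1).choose 2 : ℕ) : ℝ))
              - Pd * (Pd * E2) * ((k:ℝ) + 1) ^ 2)
            = Pd ^ 2 * ((k:ℝ) + 1) * (((k:ℝ) + 1) * Q - Sg ^ 2) := by
          have hC2' : (((k + 1).choose 2 : ℕ) : ℝ) * 2 = ((k:ℝ) + 1) * k := by
            push_cast at hC2 ⊢; linarith [hC2]
          linear_combination (- Pd ^ 2 * ((k:ℝ) + 1) ^ 2) * hid2 + (Pd ^ 2 * Sg ^ 2) * hC2'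
        linarith [heq, h5]

lemma choose_log_concave (N k : ℕ) (hk : 2 ≤ k) :
    N.choose k * N.choose (k - 2) ≤ N.choose (k - 1) ^ 2 := by
  rcases Nat.lt_or_ge N k with h | h
  · rw [Nat.choose_eq_zero_of_lt h]; simp
  · set d := N - k with hd
    have h1 : N.choose k * k = N.choose (k - 1) * (d + 1) := by
      have h := Nat.choose_succ_right_eq N (k - 1)
      have e : k - 1 + 1 = k := by omega
      have e2 : N - (k - 1) = d + 1 := by omega
      rw [e, e2] at h; exact h
    have h2 : N.choose (k - 1) * (k - 1) = N.choose (k - 2) * (d + 2) := by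
      have h := Nat.choose_succ_right_eq N (k - 2)
      have e : k - 2 + 1 = k - 1 := by omega
      have e2 : N - (k - 2) = d + 2 := by omega
      rw [e, e2] at h; exact h
    have key : (N.choose k * N.choose (k - 2)) * (k * (d + 2))
        ≤ (N.choose (k - 1) ^ 2) * (k * (d + 2)) := by
      calc (N.choose k * N.choose (k - 2)) * (k * (d + 2))
          = (N.choose k * k) * (N.choose (k - 2) * (d + 2)) := by ring
        _ = (N.choose (k - 1) * (d + 1)) * (N.choose (k - 1) * (k - 1)) := by rw [h1, ← h2]
        _ = (N.choose (k - 1) ^ 2) * ((d + 1) * (k - 1)) := by ring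
        _ ≤ (N.choose (k - 1) ^ 2) * (k * (d + 2)) := by
            refine Nat.mul_le_mul_left _ ?_
            calc (d + 1) * (k - 1) ≤ (d + 2) * k := Nat.mul_le_mul (by omega) (by omega)
              _ = k * (d + 2) := Nat.mul_comm _ _
    exact Nat.le_of_mul_le_mul_right key (by positivity)

/-- Shifting by a constant: expansion of `σ_j(s + c)` via taylor expansion. -/
lemma esymm_shift_pos (s : Multiset ℝ) (c : ℝ) (hc : 0 ≤ c) (j : ℕ) (hj : j ≤ Multiset.card s)
    (hpos : ∀ r : ℕ, 1 ≤ r → r ≤ j → 0 < s.esymm r) :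
    0 < (s.map (fun x => x + c)).esymm j := by
  set n := Multiset.card s with hn
  have hcomp : P (s.map (fun x => x + c)) = (P s).comp (X + C c) := by
    rw [P, P, Polynomial.multiset_prod_comp, Multiset.map_map, Multiset.map_map]
    refine congrArg _ (Multiset.map_congr rfl fun a _ => ?_)
    simp only [Function.comp_apply, add_comp, X_comp, C_comp, map_add]
    ring
  have hcard : Multiset.card (s.map (fun x => x + c)) = n := by rw [Multiset.card_map]
  have hco : (s.map (fun x => x + c)).esymm j = ((P s).comp (X + C c)).coeff (n - j) := by
    rw [← hcomp, ← hcard]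
    exact (P_coeff _ (by rw [hcard]; exact hj)).symm
  rw [hco, ← taylor_apply, taylor_coeff]
  have hdeg : (hasseDeriv (n - j) (P s)).natDegree < j + 1 := by
    have h1 := natDegree_hasseDeriv_le (P s) (n - j)
    rw [P_natDegree] at h1
    omega
  rw [eval_eq_sum_range' hdeg]
  have hterm : ∀ m ∈ Finset.range (j + 1),
      (hasseDeriv (n - j) (P s)).coeff m * c ^ m
        = (((m + (n - j)).choose (n - j) : ℕ) : ℝ) * s.esymm (j - m) * c ^ m := by
    intro m hm
    have hm' : m ≤ j := by simpa [Nat.lt_succ_iff] using hm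
    rw [hasseDeriv_coeff]
    have e1 : m + (n - j) = n - (j - m) := by omega
    rw [show (P s).coeff (m + (n - j)) = s.esymm (j - m) by
      rw [e1]; exact P_coeff s (by omega)]
    try push_cast
    try ring
  rw [Finset.sum_congr rfl hterm]
  apply Finset.sum_pos'
  · intro m hm
    have hm' : m ≤ j := by simpa [Nat.lt_succ_iff] using Finset.mem_range.mp hm
    have h1 : (0:ℝ) ≤ (((m + (n - j)).choose (n - j) : ℕ) : ℝ) := Nat.cast_nonneg _
    have h2 : 0 ≤ s.esymm (j - m) := by
      rcases Nat.eq_zero_or_pos (j - m) with h | h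
      · rw [h, esymm_zero']; norm_num
      · exact le_of_lt (hpos _ h (by omega))
    positivity
  · refine ⟨0, Finset.mem_range.mpr (by omega), ?_⟩
    have e0 : j - 0 = j := rfl
    have hb : (0 + (n - j)).choose (n - j) = 1 := by
      rw [Nat.zero_add, Nat.choose_self]
    rw [hb, e0]
    have h2 : 0 < s.esymm j := by
      rcases Nat.eq_zero_or_pos j with h | h
      · rw [h, esymm_zero']; norm_num
      · exact hpos _ h le_rfl
    simp only [pow_zero, Nat.cast_one, one_mul, mul_one]
    exact h2

/-! ### Bridges between `esymm` on `Fin n → ℝ` and `Multiset.esymm` -/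

def msOf (n : ℕ) (lam : Fin n → ℝ) : Multiset ℝ := Finset.univ.val.map lam

def msDel (n : ℕ) (i : Fin n) (lam : Fin n → ℝ) : Multiset ℝ :=
  (Finset.univ.erase i).val.map lam

lemma esymm_eq (n k : ℕ) (lam : Fin n → ℝ) : esymm n k lam = (msOf n lam).esymm k :=
  (Finset.esymm_map_val lam Finset.univ k).symm

lemma card_msDel (n : ℕ) (i : Fin n) (lam : Fin n → ℝ) :
    Multiset.card (msDel n i lam) = n - 1 := by
  rw [msDel, Multiset.card_map, ← Finset.card_def, Finset.card_erase_of_mem (Finset.mem_univ i),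
    Finset.card_univ, Fintype.card_fin]

lemma cons_msDel (n : ℕ) (i : Fin n) (lam : Fin n → ℝ) :
    msOf n lam = lam i ::ₘ msDel n i lam := by
  have h : (Finset.univ : Finset (Fin n)).val
      = i ::ₘ (Finset.univ : Finset (Fin n)).val.erase i :=
    (Multiset.cons_erase (by simp [← Finset.mem_def])).symm
  rw [msOf, msDel, Finset.erase_val]
  conv_lhs => rw [h]
  rw [Multiset.map_cons]

lemma msDel_update (n : ℕ) (i : Fin n) (lam : Fin n → ℝ) :
    msDel n i (Function.update lam i 0) = msDel n i lam := by
  rw [msDel, msDel]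
  refine Multiset.map_congr rfl fun x hx => ?_
  have : x ≠ i := by
    have := Finset.mem_erase.mp (Finset.mem_def.mpr hx)
    exact this.1
  simp [Function.update_apply, this]

lemma esymm_update (n : ℕ) (i : Fin n) (lam : Fin n → ℝ) (j : ℕ) :
    esymm n j (Function.update lam i 0) = (msDel n i lam).esymm j := by
  rw [esymm_eq, cons_msDel n i (Function.update lam i 0), Function.update_self, msDel_update]
  cases j with
  | zero => rw [esymm_zero', esymm_zero']
  | succ j => rw [esymm_cons, zero_mul, add_zero]

lemma esymm_split (n j : ℕ) (i : Fin n) (lam : Fin n → ℝ) :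
    esymm n (j + 1) lam = (msDel n i lam).esymm (j + 1) + lam i * (msDel n i lam).esymm j := by
  rw [esymm_eq, cons_msDel n i lam, esymm_cons]

/-! ### The Gårding cone is star-shaped about `(1,…,1)` -/

lemma ones_pos (n j : ℕ) (hj : j ≤ n) (f : Fin n → ℝ) (hf : ∀ x, f x = 1) :
    esymm n j f = (n.choose j : ℝ) := by
  rw [esymm]
  have : ∀ s ∈ Finset.powersetCard j (Finset.univ : Finset (Fin n)), ∏ x ∈ s, f x = 1 := by
    intro s _
    simp [hf]
  rw [Finset.sum_congr rfl this]
  simp [Finset.card_powersetCard, Finset.card_univ]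

lemma gamma_shift {n m : ℕ} (hmn : m ≤ n) {lam : Fin n → ℝ} (hlam : lam ∈ GammaCone n m)
    {c : ℝ} (hc : 0 ≤ c) : (fun x => lam x + c) ∈ GammaCone n m := by
  intro j hj1 hj2
  have hmap : msOf n (fun x => lam x + c) = (msOf n lam).map (fun x => x + c) := by
    rw [msOf, msOf, Multiset.map_map]
    rfl
  rw [esymm_eq, hmap]
  refine esymm_shift_pos _ c hc j ?_ ?_
  · rw [msOf, Multiset.card_map, ← Finset.card_def, Finset.card_univ, Fintype.card_fin]
    omega
  · intro r h1 h2
    rw [← esymm_eq]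
    exact hlam r h1 (by omega)

lemma gamma_scale (n j : ℕ) (c : ℝ) (lam : Fin n → ℝ) :
    esymm n j (fun x => c * lam x) = c ^ j * esymm n j lam := by
  have hmap : msOf n (fun x => c * lam x) = (msOf n lam).map (fun x => c * x) := by
    rw [msOf, msOf, Multiset.map_map]
    rfl
  rw [esymm_eq, hmap, esymm_smul, ← esymm_eq]

lemma gamma_seg {n m : ℕ} (hm : 1 ≤ m) (hmn : m ≤ n) {lam : Fin n → ℝ}
    (hlam : lam ∈ GammaCone n m) {t : ℝ} (ht : t ∈ Set.Icc (0:ℝ) 1) :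
    (fun x => (1 - t) * lam x + t) ∈ GammaCone n m := by
  obtain ⟨ht0, ht1⟩ := ht
  rcases eq_or_lt_of_le ht1 with rfl | ht1'
  · intro j hj1 hj2
    rw [ones_pos n j (by omega) _ (fun x => by ring)]
    exact_mod_cast Nat.choose_pos (by omega : j ≤ n)
  · have h1t : 0 < 1 - t := by linarith
    have hfe : (fun x => (1 - t) * lam x + t) = fun x => (1 - t) * (lam x + t / (1 - t)) := by
      funext x
      field_simp
    intro j hj1 hj2
    rw [hfe, gamma_scale]
    have hshift := gamma_shift hmn hlam (div_nonneg ht0 (le_of_lt h1t)) j hj1 hj2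
    positivity

/-! ### Positivity of deleted symmetric functions on the cone -/

lemma gammaDel_pos (n : ℕ) : ∀ m : ℕ, 1 ≤ m → m ≤ n → ∀ lam : Fin n → ℝ,
    lam ∈ GammaCone n m → ∀ i : Fin n, ∀ j, j ≤ m - 1 → 0 < (msDel n i lam).esymm j := by
  intro m
  induction m with
  | zero => omega
  | succ m ih =>
    intro _ hmn lam hlam i j hj
    rcases Nat.eq_zero_or_pos m with rfl | hm
    · have hj0 : j = 0 := by omega
      rw [hj0, esymm_zero']
      norm_num
    · rcases Nat.lt_or_ge j m with hjm | hjm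
      · exact ih hm (by omega) lam (fun r h1 h2 => hlam r h1 (by omega)) i j (by omega)
      · have hjm' : j = m := by omega
        subst hjm'
        -- Step 1 : σ_m(μ|i) never vanishes on Γ_{m+1}
        have nonvan : ∀ mu : Fin n → ℝ, mu ∈ GammaCone n (j + 1) →
            (msDel n i mu).esymm j ≠ 0 := by
          intro mu hmu hzero
          have hm2 : 0 < (msDel n i mu).esymm (j - 1) :=
            ih hm (by omega) mu (fun r h1 h2 => hmu r h1 (by omega)) i (j - 1) (by omega)
          have em : j - 1 + 1 = j := by omega
          have hsm : esymm n j mu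
              = (msDel n i mu).esymm j + mu i * (msDel n i mu).esymm (j - 1) := by
            conv_lhs => rw [← em]
            rw [esymm_split n (j-1) i mu, em]
          have hmupos := hmu j (by omega) (by omega)
          rw [hsm, hzero, zero_add] at hmupos
          have hmui : 0 < mu i := by nlinarith [hm2, hmupos]
          have hsm1 : esymm n (j + 1) mu
              = (msDel n i mu).esymm (j + 1) + mu i * (msDel n i mu).esymm j :=
            esymm_split n j i mu
          have htp := hmu (j + 1) (by omega) le_rfl
          rw [hsm1, hzero, mul_zero, add_zero] at htp
          rcases Nat.lt_or_ge (n - 1) (j + 1) with hcase | hcase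
          · rw [esymm_of_card_lt (by rw [card_msDel]; omega)] at htp
            exact lt_irrefl 0 htp
          · have hnew := newton (n - 1) (msDel n i mu) (card_msDel n i mu) j hm (by omega)
            rw [hzero] at hnew
            have hch : (0:ℝ) < (((n - 1).choose j : ℕ) : ℝ) := by
              exact_mod_cast Nat.choose_pos (by omega : j ≤ n - 1)
            have hpos : 0 < (msDel n i mu).esymm (j + 1) * (msDel n i mu).esymm (j - 1)
                * ((((n - 1).choose j : ℕ)) : ℝ) ^ 2 :=
              mul_pos (mul_pos htp hm2) (pow_pos hch 2)
            nlinarith [hnew, hpos]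
        -- Step 2 : segment to (1,…,1) plus IVT
        set f : ℝ → ℝ := fun t =>
          esymm n j (Function.update (fun x => (1 - t) * lam x + t) i 0) with hfdef
        have hcont : Continuous f := by
          rw [hfdef]
          simp only [esymm]
          refine continuous_finset_sum _ fun s _ => continuous_finset_prod _ fun x _ => ?_
          simp only [Function.update_apply]
          by_cases hx : x = i
          · simp [hx]
            exact continuous_const
          · simp only [hx, if_false]
            fun_prop
        have hfval : ∀ t : ℝ, f t = (msDel n i (fun x => (1 - t) * lam x + t)).esymm j :=
          fun t => esymm_update n i _ j
        have hf1 : 0 < f 1 := by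
          rw [hfval 1]
          have hmap1 : msDel n i (fun x => (1 - (1:ℝ)) * lam x + 1)
              = msDel n i (fun _ => (1:ℝ)) := by
            rw [msDel, msDel]
            refine Multiset.map_congr rfl fun x _ => by ring
          rw [hmap1]
          have : (msDel n i (fun _ => (1:ℝ))).esymm j = (((n-1).choose j : ℕ) : ℝ) := by
            rw [msDel, Finset.esymm_map_val]
            have : ∀ s ∈ Finset.powersetCard j (Finset.univ.erase i), (∏ x ∈ s, (1:ℝ)) = 1 :=
              fun s _ => Finset.prod_const_one
            rw [Finset.sum_congr rfl this]
            simp [Finset.card_powersetCard, Finset.card_erase_of_mem (Finset.mem_univ i),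
              Finset.card_univ]
          rw [this]
          exact_mod_cast Nat.choose_pos (by omega : j ≤ n - 1)
        have hnz : ∀ t ∈ Set.Icc (0:ℝ) 1, f t ≠ 0 := by
          intro t ht
          rw [hfval t]
          exact nonvan _ (gamma_seg (by omega) hmn hlam ht)
        have hf0 : f 0 = (msDel n i lam).esymm j := by
          rw [hfval 0]
          have : msDel n i (fun x => (1 - (0:ℝ)) * lam x + 0) = msDel n i lam := by
            rw [msDel, msDel]
            exact Multiset.map_congr rfl fun x _ => by ring
          rw [this]
        by_contra hcon
        rw [← hf0] at hcon
        have hf0ne : f 0 ≠ 0 := hnz 0 ⟨le_refl 0, by norm_num⟩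
        have hf0lt : f 0 < 0 := by
          rcases lt_trichotomy (f 0) 0 with h | h | h
          · exact h
          · exact absurd h hf0ne
          · exact absurd h hcon
        have hsub := intermediate_value_Icc (by norm_num : (0:ℝ) ≤ 1) hcont.continuousOn
        have h0mem : (0:ℝ) ∈ Set.Icc (f 0) (f 1) := ⟨le_of_lt hf0lt, le_of_lt hf1⟩
        obtain ⟨t, htmem, htval⟩ := hsub h0mem
        exact hnz t htmem htval

end MyEsymm

open MyEsymm

/-- Lemma 2.8, second part: for `2 ≤ k ≤ n` and `λ ∈ Γ_{k-1}`, for every index `i`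
one has `σ_{k-2}(λ|i) > 0`, the inequality
`σ_{k-1}(λ|i) σ_{k-1}(λ) ≥ σ_k(λ) σ_{k-2}(λ|i)`, and equivalently
`σ_{k-1}(λ|i)/σ_{k-2}(λ|i) ≥ σ_k(λ)/σ_{k-1}(λ)`. -/
theorem deleted_quotient_weak (n k : ℕ) (hn : 2 ≤ n) (hk : 2 ≤ k) (hkn : k ≤ n)
    (lam : Fin n → ℝ) (hlam : lam ∈ GammaCone n (k - 1)) (i : Fin n) :
    0 < esymm n (k - 2) (Function.update lam i 0) ∧
    esymm n (k - 1) (Function.update lam i 0) * esymm n (k - 1) lam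
      ≥ esymm n k lam * esymm n (k - 2) (Function.update lam i 0) ∧
    esymm n (k - 1) (Function.update lam i 0) / esymm n (k - 2) (Function.update lam i 0)
      ≥ esymm n k lam / esymm n (k - 1) lam := by
  set u := msDel n i lam with hu
  have hcard : Multiset.card u = n - 1 := card_msDel n i lam
  have hA : 0 < u.esymm (k - 2) :=
    gammaDel_pos n (k - 1) (by omega) (by omega) lam hlam i (k - 2) (by omega)
  have hupd : ∀ j : ℕ, esymm n j (Function.update lam i 0) = u.esymm j :=
    fun j => esymm_update n i lam j
  have hA' : 0 < esymm n (k - 2) (Function.update lam i 0) := by rw [hupd]; exact hA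
  -- reduced Newton inequality
  have hred : u.esymm k * u.esymm (k - 2) ≤ (u.esymm (k - 1)) ^ 2 := by
    rcases Nat.lt_or_ge (n - 1) k with hc | hc
    · rw [esymm_of_card_lt (by omega : Multiset.card u < k), zero_mul]
      exact sq_nonneg _
    · have hnew := newton (n - 1) u hcard (k - 1) (by omega) (by omega)
      have e1 : k - 1 + 1 = k := by omega
      have e2 : k - 1 - 1 = k - 2 := by omega
      rw [e1, e2] at hnew
      have hlc := choose_log_concave (n - 1) k hk
      have hlcR : ((n - 1).choose k : ℝ) * ((n - 1).choose (k - 2) : ℝ)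
          ≤ (((n - 1).choose (k - 1) : ℕ) : ℝ) ^ 2 := by exact_mod_cast hlc
      have hsq : (0:ℝ) ≤ (u.esymm (k - 1)) ^ 2 := sq_nonneg _
      have hch : (0:ℝ) < (((n - 1).choose (k - 1) : ℕ) : ℝ) ^ 2 := by
        have : 0 < ((n - 1).choose (k - 1) : ℕ) := Nat.choose_pos (by omega)
        positivity
      have h2 := mul_le_mul_of_nonneg_left hlcR hsq
      have hchain : (u.esymm k * u.esymm (k - 2)) * (((n - 1).choose (k - 1) : ℕ) : ℝ) ^ 2
          ≤ ((u.esymm (k - 1)) ^ 2) * (((n - 1).choose (k - 1) : ℕ) : ℝ) ^ 2 := by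
        nlinarith [hnew, h2]
      exact le_of_mul_le_mul_right hchain hch
  -- splitting identities
  have hs1 : esymm n (k - 1) lam = u.esymm (k - 1) + lam i * u.esymm (k - 2) := by
    have e : k - 2 + 1 = k - 1 := by omega
    conv_lhs => rw [← e]
    rw [esymm_split n (k - 2) i lam, e]
  have hs2 : esymm n k lam = u.esymm k + lam i * u.esymm (k - 1) := by
    have e : k - 1 + 1 = k := by omega
    conv_lhs => rw [← e]
    rw [esymm_split n (k - 1) i lam, e]
  have hB : esymm n (k - 1) (Function.update lam i 0) * esymm n (k - 1) lam
      ≥ esymm n k lam * esymm n (k - 2) (Function.update lam i 0) := by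
    rw [hupd, hupd, hs1, hs2]
    nlinarith [hred]
  refine ⟨hA', hB, ?_⟩
  have hlk1 : 0 < esymm n (k - 1) lam := hlam (k - 1) (by omega) le_rfl
  rw [ge_iff_le, div_le_div_iff₀ hlk1 hA']
  linarith [hB]
end
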